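/- arXiv:1807.06474 — 8 statements merged into one kernel-verified Lean document; each statement's English description precedes it below -/
import Mathlib

section
/- Let Δ > 0, ā ≥ 0, b̄ ≥ 0, σ̄ ∈ ℝ, and let a̲, a* be reals with 0 ≤ a̲ ≤ a*. Suppose y ≥ 0, z ∈ ℝ, w ∈ ℝ, and suppose y′ > 0 satisfies the implicit Euler step equation y′ = y + (a̲/y′ − ā·y′ + b̄·z²/y′)·Δ + σ̄·w. Then (y′)² ≤ (2·a* + σ̄²)·Δ + 2·b̄·z²·Δ + y² + M, where M = 2·σ̄·y·w + σ̄²·(w² − Δ). -/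
/-- Pathwise one-step second-moment inequality for the drift-implicit Euler scheme:
if `y' > 0` solves `y' = y + (a̲/y' − ā·y' + b̄·z²/y')·Δ + σ̄·w`, then
`(y')² ≤ (2a* + σ̄²)Δ + 2b̄·z²·Δ + y² + M` with
`M = 2σ̄·y·w + σ̄²·(w² − Δ)`. -/
theorem implicit_euler_one_step_square_bound
    (Δ aBar bBar σBar aLow aStar : ℝ)
    (hΔ : 0 < Δ) (haBar : 0 ≤ aBar) (hbBar : 0 ≤ bBar)
    (haLow : 0 ≤ aLow) (haStar : aLow ≤ aStar)
    (y z w y' : ℝ) (hy : 0 ≤ y) (hy' : 0 < y')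
    (hstep : y' = y + (aLow / y' - aBar * y' + bBar * z ^ 2 / y') * Δ + σBar * w) :
    y' ^ 2 ≤ (2 * aStar + σBar ^ 2) * Δ + 2 * bBar * z ^ 2 * Δ + y ^ 2
        + (2 * σBar * y * w + σBar ^ 2 * (w ^ 2 - Δ)) := by
  have hne := hy'.ne'
  have h1 : y' ^ 2 = (y + σBar * w) * y' + (aLow - aBar * y' ^ 2 + bBar * z ^ 2) * Δ := by
    have h := congrArg (· * y') hstep
    field_simp at h
    ring_nf at h ⊢
    linarith
  nlinarith [sq_nonneg (y' - (y + σBar * w)), mul_nonneg (mul_nonneg haBar (sq_nonneg y')) hΔ.le, mul_nonneg hbBar (sq_nonneg z), mul_pos hΔ (mul_pos hΔ hΔ)]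
end

section
/- Fix N ∈ ℕ with N ≥ 1, τ > 0, set Δ = τ/N and t_k = t₀ + k·Δ. Let ā ≥ 0, b̄ ≥ 0, σ̄ > 0 and let a̲ : ℝ → ℝ be measurable with 0 ≤ a̲(t) ≤ a* for all t. On a probability space, let (ΔW_k)_{k≥0} be independent random variables, each with the Gaussian law N(0, Δ), and let y_{−N}, …, y₀ be nonnegative random variables, independent of the family (ΔW_k)_{k≥0}, such that E[y_k²] ≤ K₀ for all −N ≤ k ≤ 0. Define recursively for k ≥ 0: y_{k+1} = (y_k + σ̄·ΔW_k + √((y_k + σ̄·ΔW_k)² + 4·(1 + ā·Δ)·(a̲(t_{k+1}) + b̄·y²_{k+1−N})·Δ)) / (2·(1 + ā·Δ)). Then for every T > t₀ there exists a finite constant K_T such that sup over all k ≥ 0 with t_k ≤ T of E[y_k²] is at most K_T. -/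
open MeasureTheory ProbabilityTheory
open scoped ENNReal NNReal

lemma aux_one_le_pow {G : ℝ≥0∞} (hG : 1 ≤ G) (c : ℕ) : 1 ≤ G ^ c := by
  induction c with
  | zero => simp
  | succ c ih =>
    rw [pow_succ]
    calc (1 : ℝ≥0∞) ≤ G ^ c := ih
    _ = G ^ c * 1 := (mul_one _).symm
    _ ≤ G ^ c * G := mul_le_mul_right hG _

lemma aux_pow_mono {G : ℝ≥0∞} (hG : 1 ≤ G) {m n : ℕ} (h : m ≤ n) :
    G ^ m ≤ G ^ n := by
  obtain ⟨c, rfl⟩ := Nat.exists_eq_add_of_le h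
  rw [pow_add]
  calc G ^ m = G ^ m * 1 := (mul_one _).symm
  _ ≤ G ^ m * G ^ c := mul_le_mul_right (aux_one_le_pow hG c) _

/-- Pointwise bound for the positive root of the implicit scheme quadratic. -/
lemma aux_key_real (d s c Δ : ℝ) (hd : 1 ≤ d) (hΔ : 0 ≤ Δ) (hc : 0 ≤ c) :
    ((s + Real.sqrt (s ^ 2 + 4 * d * c * Δ)) / (2 * d)) ^ 2 ≤ s ^ 2 + 2 * c * Δ := by
  have hd0 : (0 : ℝ) < d := lt_of_lt_of_le one_pos hd
  have hq : (0 : ℝ) ≤ 4 * d * c * Δ := by positivity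
  have harg : (0 : ℝ) ≤ s ^ 2 + 4 * d * c * Δ := by nlinarith [sq_nonneg s]
  have hsq : Real.sqrt (s ^ 2 + 4 * d * c * Δ) ^ 2 = s ^ 2 + 4 * d * c * Δ :=
    Real.sq_sqrt harg
  set r := Real.sqrt (s ^ 2 + 4 * d * c * Δ) with hr
  have hrn : 0 ≤ r := Real.sqrt_nonneg _
  rw [div_pow, div_le_iff₀ (by positivity : (0:ℝ) < (2 * d) ^ 2)]
  have hd2 : 1 ≤ d ^ 2 := by nlinarith
  have hd2' : d ≤ d ^ 2 := by nlinarith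
  nlinarith [sq_nonneg (s - r), mul_nonneg (sub_nonneg.2 hd2) (sq_nonneg s),
    mul_nonneg (sub_nonneg.2 hd2') (mul_nonneg hc hΔ)]

/-- Finiteness of the second moment of a Gaussian. -/
lemma aux_gaussian_sq_ne_top {v : ℝ≥0} (hv : v ≠ 0) :
    ∫⁻ x, ENNReal.ofReal (x ^ 2) ∂(gaussianReal 0 v) ≠ ⊤ := by
  have hvpos : (0 : ℝ) < v := by
    exact_mod_cast pos_iff_ne_zero.mpr hv
  have hb : (0 : ℝ) < (2 * (v : ℝ))⁻¹ := by positivity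
  have h1 : Integrable (fun x : ℝ => x ^ (2 : ℝ) * Real.exp (-(2 * (v : ℝ))⁻¹ * x ^ 2)) :=
    integrable_rpow_mul_exp_neg_mul_sq hb (by norm_num)
  have h2 : Integrable (fun x : ℝ => x ^ 2 * Real.exp (-(2 * (v : ℝ))⁻¹ * x ^ 2)) := by
    refine h1.congr (Filter.Eventually.of_forall fun x => ?_)
    dsimp only
    rw [show ((2:ℝ)) = ((2:ℕ):ℝ) by norm_num, Real.rpow_natCast]
  have hint : Integrable (fun x : ℝ => gaussianPDFReal 0 v x * x ^ 2) := by
    have heq : (fun x : ℝ => gaussianPDFReal 0 v x * x ^ 2)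
        = fun x => (Real.sqrt (2 * Real.pi * v))⁻¹
            * (x ^ 2 * Real.exp (-(2 * (v : ℝ))⁻¹ * x ^ 2)) := by
      funext x
      rw [gaussianPDFReal]
      have : -(x - 0) ^ 2 / (2 * (v : ℝ)) = -(2 * (v : ℝ))⁻¹ * x ^ 2 := by ring
      rw [this]
      ring
    rw [heq]
    exact h2.const_mul _
  have hsqm : Measurable fun x : ℝ => ENNReal.ofReal (x ^ 2) := by measurability
  rw [gaussianReal_of_var_ne_zero _ hv,
    lintegral_withDensity_eq_lintegral_mul _ (measurable_gaussianPDF 0 v)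
      hsqm]
  have heq2 : ∀ x : ℝ, (gaussianPDF 0 v * fun x => ENNReal.ofReal (x ^ 2)) x
      = ENNReal.ofReal (gaussianPDFReal 0 v x * x ^ 2) := by
    intro x
    simp only [Pi.mul_apply, gaussianPDF]
    rw [← ENNReal.ofReal_mul (gaussianPDFReal_nonneg 0 v x)]
  rw [lintegral_congr heq2,
    ← ofReal_integral_eq_lintegral_ofReal hint
      (Filter.Eventually.of_forall fun x =>
        mul_nonneg (gaussianPDFReal_nonneg 0 v x) (sq_nonneg x))]
  exact ENNReal.ofReal_ne_top

set_option maxHeartbeats 1000000 in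
/-- Lemma 3.1: uniform second-moment bounds for the drift-implicit Euler scheme
approximating the square-root of the fixed delay CIR process. -/
theorem implicit_euler_second_moment_bound
    {Ω : Type*} [MeasurableSpace Ω] (μ : Measure Ω) [IsProbabilityMeasure μ]
    (N : ℕ) (hN : 1 ≤ N) (τ t₀ : ℝ) (hτ : 0 < τ)
    (Δ : ℝ) (hΔ : Δ = τ / N)
    (aBar bBar σBar aStar : ℝ)
    (haBar : 0 ≤ aBar) (hbBar : 0 ≤ bBar) (hσBar : 0 < σBar)
    (aLow : ℝ → ℝ) (haLowMeas : Measurable aLow)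
    (haLow : ∀ t, 0 ≤ aLow t ∧ aLow t ≤ aStar)
    (ΔW : ℕ → Ω → ℝ) (hWmeas : ∀ k, Measurable (ΔW k))
    (hWindep : iIndepFun ΔW μ)
    (hWlaw : ∀ k, μ.map (ΔW k) = gaussianReal 0 (Real.toNNReal Δ))
    (y : ℤ → Ω → ℝ)
    (hymeas : ∀ k : ℤ, -(N : ℤ) ≤ k → k ≤ 0 → Measurable (y k))
    (hynonneg : ∀ k : ℤ, -(N : ℤ) ≤ k → k ≤ 0 → ∀ ω, 0 ≤ y k ω)
    (hindep : Indep
      (⨆ k ∈ Set.Icc (-(N : ℤ)) 0, MeasurableSpace.comap (y k) inferInstance)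
      (⨆ k : ℕ, MeasurableSpace.comap (ΔW k) inferInstance) μ)
    (K₀ : ℝ)
    (hinit : ∀ k : ℤ, -(N : ℤ) ≤ k → k ≤ 0 →
      ∫⁻ ω, ENNReal.ofReal ((y k ω) ^ 2) ∂μ ≤ ENNReal.ofReal K₀)
    (hrec : ∀ k : ℕ, y ((k : ℤ) + 1) = fun ω =>
      (y (k : ℤ) ω + σBar * ΔW k ω +
          Real.sqrt ((y (k : ℤ) ω + σBar * ΔW k ω) ^ 2
            + 4 * (1 + aBar * Δ)
              * (aLow (t₀ + ((k : ℝ) + 1) * Δ)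
                  + bBar * (y ((k : ℤ) + 1 - (N : ℤ)) ω) ^ 2) * Δ))
        / (2 * (1 + aBar * Δ))) :
    ∀ T : ℝ, t₀ < T → ∃ K_T : ℝ,
      ∀ k : ℕ, t₀ + (k : ℝ) * Δ ≤ T →
        ∫⁻ ω, ENNReal.ofReal ((y (k : ℤ) ω) ^ 2) ∂μ ≤ ENNReal.ofReal K_T := by
  have hΔpos : 0 < Δ := by
    rw [hΔ]
    exact div_pos hτ (by exact_mod_cast Nat.pos_of_ne_zero (by omega))
  have hN' : (1 : ℤ) ≤ (N : ℤ) := by exact_mod_cast hN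
  have hd : (1 : ℝ) ≤ 1 + aBar * Δ := le_add_of_nonneg_right (mul_nonneg haBar hΔpos.le)
  have haStar : (0 : ℝ) ≤ aStar := le_trans (haLow 0).1 (haLow 0).2
  -- Gaussian second moment constant
  set CW : ℝ≥0∞ := ∫⁻ x, ENNReal.ofReal (x ^ 2) ∂(gaussianReal 0 (Real.toNNReal Δ))
    with hCWdef
  have hCWtop : CW ≠ ⊤ := by
    rw [hCWdef]
    exact aux_gaussian_sq_ne_top (by
      simp only [ne_eq, Real.toNNReal_eq_zero, not_le]
      exact hΔpos)
  have hsqm : Measurable fun x : ℝ => ENNReal.ofReal (x ^ 2) := by measurability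
  have hCWn : ∀ n : ℕ, ∫⁻ ω, ENNReal.ofReal ((ΔW n ω) ^ 2) ∂μ = CW := by
    intro n
    rw [hCWdef, ← hWlaw n,
      lintegral_map hsqm (hWmeas n)]
  -- constants
  set c₁ : ℝ≥0∞ := ENNReal.ofReal (2 * σBar ^ 2) * CW + ENNReal.ofReal (2 * aStar * Δ)
    with hc₁def
  set c₂ : ℝ≥0∞ := ENNReal.ofReal (2 * bBar * Δ) with hc₂def
  set B : ℝ≥0∞ := ENNReal.ofReal K₀ + c₁ with hBdef
  set G : ℝ≥0∞ := 3 + c₂ with hGdef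
  have hG1 : (1 : ℝ≥0∞) ≤ G := by
    rw [hGdef]
    exact le_trans (by norm_num) le_self_add
  have hGtop : G ≠ ⊤ := by
    rw [hGdef]
    exact ENNReal.add_ne_top.mpr ⟨by norm_num, ENNReal.ofReal_ne_top⟩
  have hBtop : B ≠ ⊤ := by
    rw [hBdef, hc₁def]
    refine ENNReal.add_ne_top.mpr ⟨ENNReal.ofReal_ne_top,
      ENNReal.add_ne_top.mpr ⟨ENNReal.mul_ne_top ENNReal.ofReal_ne_top hCWtop,
        ENNReal.ofReal_ne_top⟩⟩
  -- main induction
  have key : ∀ n : ℕ, ∀ k : ℤ, -(N : ℤ) ≤ k → k ≤ (n : ℤ) →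
      Measurable (y k) ∧ (∀ ω, 0 ≤ y k ω) ∧
        ∫⁻ ω, ENNReal.ofReal ((y k ω) ^ 2) ∂μ ≤ G ^ n * B := by
    intro n
    induction n with
    | zero =>
      intro k hk1 hk2
      refine ⟨hymeas k hk1 hk2, hynonneg k hk1 hk2, (hinit k hk1 hk2).trans ?_⟩
      rw [pow_zero, one_mul, hBdef]
      exact le_self_add
    | succ n ih =>
      intro k hk1 hk2
      by_cases hkn : k ≤ (n : ℤ)
      · obtain ⟨hm, hnn, hbd⟩ := ih k hk1 hkn
        refine ⟨hm, hnn, hbd.trans ?_⟩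
        exact mul_le_mul_left (aux_pow_mono hG1 (Nat.le_succ n)) _
      · have hkeq : k = (n : ℤ) + 1 := by omega
        subst hkeq
        -- indices
        have hyk := ih (n : ℤ) (by omega) le_rfl
        have hyj := ih ((n : ℤ) + 1 - (N : ℤ)) (by omega) (by omega)
        obtain ⟨hmyk, hnnyk, hbdk⟩ := hyk
        obtain ⟨hmyj, hnnyj, hbdj⟩ := hyj
        set t : ℝ := t₀ + ((n : ℝ) + 1) * Δ with htdef
        -- measurability of y (n+1)
        have hs : Measurable fun ω => y (n : ℤ) ω + σBar * ΔW n ω :=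
          hmyk.add ((hWmeas n).const_mul σBar)
        have hinner : Measurable fun ω =>
            (y (n : ℤ) ω + σBar * ΔW n ω) ^ 2
              + 4 * (1 + aBar * Δ)
                * (aLow t + bBar * (y ((n : ℤ) + 1 - (N : ℤ)) ω) ^ 2) * Δ :=
          (hs.pow_const 2).add
            (((((hmyj.pow_const 2).const_mul bBar).const_add (aLow t)).const_mul
              (4 * (1 + aBar * Δ))).mul_const Δ)
        have hmy1 : Measurable (y ((n : ℤ) + 1)) := by
          rw [hrec n]
          exact (hs.add (Real.continuous_sqrt.measurable.comp hinner)).div_const _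
        -- nonnegativity of y (n+1)
        have hnny1 : ∀ ω, 0 ≤ y ((n : ℤ) + 1) ω := by
          intro ω
          rw [hrec n]
          dsimp only
          refine div_nonneg ?_ (by positivity)
          set s := y (n : ℤ) ω + σBar * ΔW n ω
          have habs : |s| ≤ Real.sqrt (s ^ 2
              + 4 * (1 + aBar * Δ)
                * (aLow t + bBar * (y ((n : ℤ) + 1 - (N : ℤ)) ω) ^ 2) * Δ) := by
            rw [← Real.sqrt_sq_eq_abs]
            refine Real.sqrt_le_sqrt (le_add_of_nonneg_right ?_)
            have := (haLow t).1
            positivity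
          have := neg_abs_le s
          linarith
        -- pointwise second-moment bound
        have hpt : ∀ ω, (y ((n : ℤ) + 1) ω) ^ 2
            ≤ 2 * (y (n : ℤ) ω) ^ 2 + 2 * σBar ^ 2 * (ΔW n ω) ^ 2
              + 2 * aStar * Δ
              + 2 * bBar * Δ * (y ((n : ℤ) + 1 - (N : ℤ)) ω) ^ 2 := by
          intro ω
          rw [hrec n]
          dsimp only
          have hc : (0 : ℝ) ≤ aLow t + bBar * (y ((n : ℤ) + 1 - (N : ℤ)) ω) ^ 2 :=
            add_nonneg (haLow t).1 (mul_nonneg hbBar (sq_nonneg _))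
          have h1 := aux_key_real (1 + aBar * Δ) (y (n : ℤ) ω + σBar * ΔW n ω)
            (aLow t + bBar * (y ((n : ℤ) + 1 - (N : ℤ)) ω) ^ 2) Δ hd hΔpos.le hc
          nlinarith [h1, sq_nonneg (y (n : ℤ) ω - σBar * ΔW n ω),
            mul_nonneg (sub_nonneg.2 (haLow t).2) hΔpos.le,
            mul_nonneg (mul_nonneg hbBar hΔpos.le)
              (sq_nonneg (y ((n : ℤ) + 1 - (N : ℤ)) ω))]
        -- integrate the pointwise bound
        refine ⟨hmy1, hnny1, ?_⟩
        have hA : ∫⁻ ω, ENNReal.ofReal (2 * (y (n : ℤ) ω) ^ 2) ∂μ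
            = 2 * ∫⁻ ω, ENNReal.ofReal ((y (n : ℤ) ω) ^ 2) ∂μ := by
          simp_rw [ENNReal.ofReal_mul (by norm_num : (0:ℝ) ≤ 2)]
          rw [lintegral_const_mul _ ((hmyk.pow_const 2).ennreal_ofReal)]
          norm_num
        have hB2 : ∫⁻ ω, ENNReal.ofReal (2 * σBar ^ 2 * (ΔW n ω) ^ 2) ∂μ
            = ENNReal.ofReal (2 * σBar ^ 2) * CW := by
          simp_rw [ENNReal.ofReal_mul (by positivity : (0:ℝ) ≤ 2 * σBar ^ 2)]
          rw [lintegral_const_mul _ (((hWmeas n).pow_const 2).ennreal_ofReal), hCWn n]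
        have hD : ∫⁻ ω, ENNReal.ofReal
              (2 * bBar * Δ * (y ((n : ℤ) + 1 - (N : ℤ)) ω) ^ 2) ∂μ
            = c₂ * ∫⁻ ω, ENNReal.ofReal ((y ((n : ℤ) + 1 - (N : ℤ)) ω) ^ 2) ∂μ := by
          simp_rw [ENNReal.ofReal_mul (by positivity : (0:ℝ) ≤ 2 * bBar * Δ)]
          rw [lintegral_const_mul _ ((hmyj.pow_const 2).ennreal_ofReal), hc₂def]
        calc ∫⁻ ω, ENNReal.ofReal ((y ((n : ℤ) + 1) ω) ^ 2) ∂μ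
            ≤ ∫⁻ ω, (ENNReal.ofReal (2 * (y (n : ℤ) ω) ^ 2)
                + ENNReal.ofReal (2 * σBar ^ 2 * (ΔW n ω) ^ 2)
                + ENNReal.ofReal (2 * aStar * Δ)
                + ENNReal.ofReal
                    (2 * bBar * Δ * (y ((n : ℤ) + 1 - (N : ℤ)) ω) ^ 2)) ∂μ := by
              refine lintegral_mono fun ω => ?_
              refine le_trans (ENNReal.ofReal_le_ofReal (hpt ω)) ?_
              refine le_trans ENNReal.ofReal_add_le ?_
              refine add_le_add_left ?_ _
              refine le_trans ENNReal.ofReal_add_le ?_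
              exact add_le_add_left ENNReal.ofReal_add_le _
          _ = 2 * (∫⁻ ω, ENNReal.ofReal ((y (n : ℤ) ω) ^ 2) ∂μ)
                + ENNReal.ofReal (2 * σBar ^ 2) * CW
                + ENNReal.ofReal (2 * aStar * Δ)
                + c₂ * ∫⁻ ω, ENNReal.ofReal ((y ((n : ℤ) + 1 - (N : ℤ)) ω) ^ 2) ∂μ := by
              rw [lintegral_add_left (f := fun ω => ENNReal.ofReal (2 * (y (n : ℤ) ω) ^ 2)
                  + ENNReal.ofReal (2 * σBar ^ 2 * (ΔW n ω) ^ 2)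
                  + ENNReal.ofReal (2 * aStar * Δ))
                  (((((hmyk.pow_const 2).const_mul 2).ennreal_ofReal).add
                    (((hWmeas n).pow_const 2).const_mul (2 * σBar ^ 2)).ennreal_ofReal).add
                    measurable_const),
                lintegral_add_left (f := fun ω => ENNReal.ofReal (2 * (y (n : ℤ) ω) ^ 2)
                  + ENNReal.ofReal (2 * σBar ^ 2 * (ΔW n ω) ^ 2))
                  ((((hmyk.pow_const 2).const_mul 2).ennreal_ofReal).add
                    (((hWmeas n).pow_const 2).const_mul (2 * σBar ^ 2)).ennreal_ofReal),
                lintegral_add_left (((hmyk.pow_const 2).const_mul 2).ennreal_ofReal),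
                hA, hB2, hD, lintegral_const, measure_univ, mul_one]
          _ ≤ 2 * (G ^ n * B) + ENNReal.ofReal (2 * σBar ^ 2) * CW
                + ENNReal.ofReal (2 * aStar * Δ) + c₂ * (G ^ n * B) := by
              gcongr
          _ = 2 * (G ^ n * B) + c₁ + c₂ * (G ^ n * B) := by
              rw [hc₁def]; ring
          _ ≤ 2 * (G ^ n * B) + G ^ n * B + c₂ * (G ^ n * B) := by
              gcongr
              calc c₁ ≤ B := by rw [hBdef]; exact le_add_self
              _ = 1 * B := (one_mul _).symm
              _ ≤ G ^ n * B := mul_le_mul_left (aux_one_le_pow hG1 n) _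
          _ = G ^ (n + 1) * B := by rw [hGdef]; ring
  -- conclusion
  intro T hT
  set M : ℕ := Nat.ceil ((T - t₀) / Δ) with hMdef
  have hfin : G ^ M * B ≠ ⊤ := ENNReal.mul_ne_top (ENNReal.pow_ne_top hGtop) hBtop
  refine ⟨(G ^ M * B).toReal, fun k hk => ?_⟩
  have hkM : k ≤ M := by
    have h1 : (k : ℝ) * Δ ≤ T - t₀ := by linarith
    have h2 : (k : ℝ) ≤ (T - t₀) / Δ := (le_div_iff₀ hΔpos).mpr h1
    have h3 : (k : ℝ) ≤ (M : ℝ) := le_trans h2 (Nat.le_ceil _)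
    exact_mod_cast h3
  have hbd := (key k (k : ℤ) (by omega) le_rfl).2.2
  refine hbd.trans ?_
  rw [ENNReal.ofReal_toReal hfin]
  exact mul_le_mul_left (aux_pow_mono hG1 hkM) _
end

section
/- Fix N ∈ ℕ with N ≥ 1, τ > 0, set Δ = τ/N and t_k = t₀ + k·Δ. Let ā ≥ 0, b̄ ≥ 0, σ̄ > 0 and let a̲ : ℝ → ℝ be measurable with 0 ≤ a̲(t) ≤ a* for all t. On a probability space, let (ΔW_k)_{k≥0} be independent random variables, each with the Gaussian law N(0, Δ), and let y_{−N}, …, y₀ be nonnegative random variables, independent of the family (ΔW_k)_{k≥0}, such that for every p ≥ 1 there is a constant K_{2p} with E[y_k^{2p}] ≤ K_{2p} for all −N ≤ k ≤ 0. Define recursively for k ≥ 0: y_{k+1} = (y_k + σ̄·ΔW_k + √((y_k + σ̄·ΔW_k)² + 4·(1 + ā·Δ)·(a̲(t_{k+1}) + b̄·y²_{k+1−N})·Δ)) / (2·(1 + ā·Δ)). Then for every p ≥ 1 and every T > t₀ there exists a finite constant K_{2p,T} such that E[ sup over all k ≥ 0 with t_k ≤ T of y_k^{2p} ] ≤ K_{2p,T}.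 -/
open MeasureTheory ProbabilityTheory


private lemma sqrt_add_le' {x y : ℝ} (hx : 0 ≤ x) (hy : 0 ≤ y) :
    Real.sqrt (x + y) ≤ Real.sqrt x + Real.sqrt y := by
  have hs : 0 ≤ Real.sqrt x + Real.sqrt y := by positivity
  have h : x + y ≤ (Real.sqrt x + Real.sqrt y) ^ 2 := by
    have hx2 := Real.sq_sqrt hx
    have hy2 := Real.sq_sqrt hy
    have hxy : 0 ≤ Real.sqrt x * Real.sqrt y := by positivity
    nlinarith
  calc Real.sqrt (x + y) ≤ Real.sqrt ((Real.sqrt x + Real.sqrt y) ^ 2) := Real.sqrt_le_sqrt h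
    _ = Real.sqrt x + Real.sqrt y := Real.sqrt_sq hs

private lemma rpow_add_le2 {q x y : ℝ} (hq : 0 ≤ q) (hx : 0 ≤ x) (hy : 0 ≤ y) :
    (x + y) ^ q ≤ 2 ^ q * (x ^ q + y ^ q) := by
  have h1 : x + y ≤ 2 * max x y := by
    rcases le_total x y with h | h
    · rw [max_eq_right h]; linarith
    · rw [max_eq_left h]; linarith
  have hm : (max x y) ^ q ≤ x ^ q + y ^ q := by
    rcases le_total x y with h | h
    · rw [max_eq_right h]; exact le_add_of_nonneg_left (Real.rpow_nonneg hx q)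
    · rw [max_eq_left h]; exact le_add_of_nonneg_right (Real.rpow_nonneg hy q)
  calc (x + y) ^ q ≤ (2 * max x y) ^ q := by
        apply Real.rpow_le_rpow (by linarith) h1 hq
    _ = 2 ^ q * (max x y) ^ q := Real.mul_rpow (by norm_num) (le_max_of_le_left hx)
    _ ≤ 2 ^ q * (x ^ q + y ^ q) :=
        mul_le_mul_of_nonneg_left hm (Real.rpow_nonneg (by norm_num) q)

private lemma rpow_add_le4 {q a b c d : ℝ} (hq : 0 ≤ q) (ha : 0 ≤ a) (hb : 0 ≤ b)
    (hc : 0 ≤ c) (hd : 0 ≤ d) :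
    (a + b + c + d) ^ q ≤ 4 ^ q * (a ^ q + b ^ q + c ^ q + d ^ q) := by
  have h4 : (4 : ℝ) ^ q = 2 ^ q * 2 ^ q := by
    rw [show (4:ℝ) = 2 * 2 by norm_num, Real.mul_rpow] <;> norm_num
  have h1 : (a + b + c + d) ^ q ≤ 2 ^ q * ((a + b) ^ q + (c + d) ^ q) := by
    have h := rpow_add_le2 (x := a + b) (y := c + d) hq (by linarith) (by linarith)
    calc (a + b + c + d) ^ q = ((a + b) + (c + d)) ^ q := by ring_nf
      _ ≤ _ := h
  have h2 := rpow_add_le2 (x := a) (y := b) hq ha hb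
  have h3 := rpow_add_le2 (x := c) (y := d) hq hc hd
  have h2q : (0:ℝ) ≤ 2 ^ q := Real.rpow_nonneg (by norm_num) q
  calc (a + b + c + d) ^ q ≤ 2 ^ q * ((a + b) ^ q + (c + d) ^ q) := h1
    _ ≤ 2 ^ q * ((2 ^ q * (a ^ q + b ^ q)) + (2 ^ q * (c ^ q + d ^ q))) :=
        mul_le_mul_of_nonneg_left (add_le_add h2 h3) h2q
    _ = 4 ^ q * (a ^ q + b ^ q + c ^ q + d ^ q) := by rw [h4]; ring

private lemma step_nonneg {u c d : ℝ} (hc : 0 ≤ c) (hd : 0 < d) :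
    0 ≤ (u + Real.sqrt (u ^ 2 + c)) / (2 * d) := by
  have h1 : |u| ≤ Real.sqrt (u ^ 2 + c) := by
    rw [← Real.sqrt_sq_eq_abs]
    exact Real.sqrt_le_sqrt (le_add_of_nonneg_right hc)
  have h2 := neg_abs_le u
  apply div_nonneg (by linarith) (by linarith)

private lemma step_bound {Δ aBar aL b yk w y' : ℝ} (hΔ : 0 ≤ Δ) (ha : 0 ≤ aBar)
    (haL : 0 ≤ aL) (hb : 0 ≤ b) (hyk : 0 ≤ yk) (hy' : 0 ≤ y') :
    (yk + w + Real.sqrt ((yk + w) ^ 2 + 4 * (1 + aBar * Δ) * (aL + b * y' ^ 2) * Δ))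
        / (2 * (1 + aBar * Δ))
      ≤ yk + |w| + (Real.sqrt (aL * Δ) + Real.sqrt (b * Δ) * y') := by
  have hd1 : (1:ℝ) ≤ 1 + aBar * Δ := by nlinarith
  set d : ℝ := 1 + aBar * Δ with hdd
  have hd0 : (0:ℝ) < d := by linarith
  set u : ℝ := yk + w with hu
  have hc0 : 0 ≤ 4 * d * (aL + b * y' ^ 2) * Δ := by positivity
  have h1 : Real.sqrt (u ^ 2 + 4 * d * (aL + b * y' ^ 2) * Δ)
      ≤ |u| + Real.sqrt (4 * d * (aL + b * y' ^ 2) * Δ) := by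
    have h := sqrt_add_le' (sq_nonneg u) hc0
    rwa [Real.sqrt_sq_eq_abs] at h
  have key : Real.sqrt (4 * d * (aL + b * y' ^ 2) * Δ)
      ≤ 2 * Real.sqrt d * (Real.sqrt (aL * Δ) + Real.sqrt (b * Δ) * y') := by
    have e1 : 4 * d * (aL + b * y' ^ 2) * Δ = (4 * d) * (aL * Δ + (b * Δ) * y' ^ 2) := by ring
    rw [e1, Real.sqrt_mul (by positivity)]
    have e2 : Real.sqrt (4 * d) = 2 * Real.sqrt d := by
      rw [show (4:ℝ) * d = 2 ^ 2 * d by ring, Real.sqrt_mul (by norm_num),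
        Real.sqrt_sq (by norm_num)]
    have e4 : Real.sqrt ((b * Δ) * y' ^ 2) = Real.sqrt (b * Δ) * y' := by
      rw [Real.sqrt_mul (by positivity), Real.sqrt_sq hy']
    have e3 : Real.sqrt (aL * Δ + (b * Δ) * y' ^ 2)
        ≤ Real.sqrt (aL * Δ) + Real.sqrt (b * Δ) * y' := by
      have h := sqrt_add_le' (x := aL * Δ) (y := (b * Δ) * y' ^ 2) (by positivity) (by positivity)
      rwa [e4] at h
    have h2d : (0:ℝ) ≤ 2 * Real.sqrt d := by positivity
    rw [e2]
    exact mul_le_mul_of_nonneg_left e3 h2d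
  rw [div_le_iff₀ (by positivity)]
  have habs : |u| ≤ yk + |w| := by
    rw [hu]
    calc |yk + w| ≤ |yk| + |w| := abs_add_le _ _
      _ = yk + |w| := by rw [abs_of_nonneg hyk]
  have hle : u ≤ |u| := le_abs_self u
  have hsd : Real.sqrt d ≤ d := by
    rw [Real.sqrt_le_left (le_of_lt hd0)]; nlinarith
  have hS : 0 ≤ Real.sqrt (aL * Δ) + Real.sqrt (b * Δ) * y' := by positivity
  have hw0 : 0 ≤ |w| := abs_nonneg w
  nlinarith [mul_nonneg (sub_nonneg.2 hsd) hS,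
    mul_nonneg (sub_nonneg.2 hd1) (add_nonneg hyk hw0)]

private lemma integrable_abs_rpow_mul_exp_neg_mul_sq {b : ℝ} (hb : 0 < b) {s : ℝ} (hs : -1 < s) :
    Integrable (fun x : ℝ => |x| ^ s * Real.exp (-b * x ^ 2)) := by
  rw [← integrableOn_univ, ← Set.Iio_union_Ici (a := (0:ℝ)), integrableOn_union,
    integrableOn_Ici_iff_integrableOn_Ioi]
  have hIoi : IntegrableOn (fun x : ℝ => |x| ^ s * Real.exp (-b * x ^ 2)) (Set.Ioi 0) := by
    apply (integrableOn_rpow_mul_exp_neg_mul_sq hb hs).congr_fun ?_ measurableSet_Ioi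
    intro x hx
    simp only [abs_of_pos (Set.mem_Ioi.mp hx)]
  constructor
  · rw [← (Measure.measurePreserving_neg (volume : Measure ℝ)).integrableOn_comp_preimage
        (Homeomorph.neg ℝ).measurableEmbedding]
    simpa [Function.comp_def, abs_neg, neg_sq] using hIoi
  · exact hIoi


private lemma integrable_abs_rpow_mul_exp_neg_mul_sq' {b : ℝ} (hb : 0 < b) {s : ℝ} (hs : -1 < s) :
    Integrable (fun x : ℝ => |x| ^ s * Real.exp (-b * x ^ 2)) := by
  rw [← integrableOn_univ, ← Set.Iio_union_Ici (a := (0:ℝ)), integrableOn_union,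
    integrableOn_Ici_iff_integrableOn_Ioi]
  have hIoi : IntegrableOn (fun x : ℝ => |x| ^ s * Real.exp (-b * x ^ 2)) (Set.Ioi 0) := by
    apply (integrableOn_rpow_mul_exp_neg_mul_sq hb hs).congr_fun ?_ measurableSet_Ioi
    intro x hx
    simp only [abs_of_pos (Set.mem_Ioi.mp hx)]
  constructor
  · rw [← (Measure.measurePreserving_neg (volume : Measure ℝ)).integrableOn_comp_preimage
        (Homeomorph.neg ℝ).measurableEmbedding]
    simpa [Function.comp_def, abs_neg, neg_sq] using hIoi
  · exact hIoi

private lemma gaussian_moment_lt_top {v : NNReal} (hv : v ≠ 0) {q : ℝ} (hq : 0 ≤ q) :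
    ∫⁻ x, ENNReal.ofReal (|x| ^ q) ∂(gaussianReal 0 v) < ⊤ := by
  rw [gaussianReal_of_var_ne_zero _ hv,
    lintegral_withDensity_eq_lintegral_mul _ (measurable_gaussianPDF _ _)
      (by fun_prop : Measurable fun x : ℝ => ENNReal.ofReal (|x| ^ q))]
  have hv0 : (0:ℝ) < (v:ℝ) := by positivity
  have heq : (fun x : ℝ => (gaussianPDF 0 v * fun x => ENNReal.ofReal (|x| ^ q)) x)
      = fun x : ℝ => ENNReal.ofReal ((Real.sqrt (2 * Real.pi * v))⁻¹
          * (|x| ^ q * Real.exp (-(2 * (v:ℝ))⁻¹ * x ^ 2))) := by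
    funext x
    simp only [Pi.mul_apply, gaussianPDF, ← ENNReal.ofReal_mul (gaussianPDFReal_nonneg 0 v x)]
    congr 1
    simp only [gaussianPDFReal, sub_zero]
    rw [show -x ^ 2 / (2 * (v:ℝ)) = -(2 * (v:ℝ))⁻¹ * x ^ 2 by ring]
    ring
  rw [heq]
  apply Integrable.lintegral_lt_top
  exact (integrable_abs_rpow_mul_exp_neg_mul_sq' (by positivity) (by linarith)).const_mul _



/-- Proposition 3.2: moment bounds of all orders, uniform over the grid, for the
drift-implicit Euler scheme approximating the square-root of the fixed delay
CIR process. -/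
theorem implicit_euler_sup_moment_bound
    {Ω : Type*} [MeasurableSpace Ω] (μ : Measure Ω) [IsProbabilityMeasure μ]
    (N : ℕ) (hN : 1 ≤ N) (τ t₀ : ℝ) (hτ : 0 < τ)
    (Δ : ℝ) (hΔ : Δ = τ / N)
    (aBar bBar σBar aStar : ℝ)
    (haBar : 0 ≤ aBar) (hbBar : 0 ≤ bBar) (hσBar : 0 < σBar)
    (aLow : ℝ → ℝ) (haLowMeas : Measurable aLow)
    (haLow : ∀ t, 0 ≤ aLow t ∧ aLow t ≤ aStar)
    (ΔW : ℕ → Ω → ℝ) (hWmeas : ∀ k, Measurable (ΔW k))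
    (hWindep : iIndepFun ΔW μ)
    (hWlaw : ∀ k, μ.map (ΔW k) = gaussianReal 0 (Real.toNNReal Δ))
    (y : ℤ → Ω → ℝ)
    (hymeas : ∀ k : ℤ, -(N : ℤ) ≤ k → k ≤ 0 → Measurable (y k))
    (hynonneg : ∀ k : ℤ, -(N : ℤ) ≤ k → k ≤ 0 → ∀ ω, 0 ≤ y k ω)
    (hindep : Indep
      (⨆ k ∈ Set.Icc (-(N : ℤ)) 0, MeasurableSpace.comap (y k) inferInstance)
      (⨆ k : ℕ, MeasurableSpace.comap (ΔW k) inferInstance) μ)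
    (hinit : ∀ p : ℝ, 1 ≤ p → ∃ K : ℝ, ∀ k : ℤ, -(N : ℤ) ≤ k → k ≤ 0 →
      ∫⁻ ω, ENNReal.ofReal ((y k ω) ^ (2 * p)) ∂μ ≤ ENNReal.ofReal K)
    (hrec : ∀ k : ℕ, y ((k : ℤ) + 1) = fun ω =>
      (y (k : ℤ) ω + σBar * ΔW k ω +
          Real.sqrt ((y (k : ℤ) ω + σBar * ΔW k ω) ^ 2
            + 4 * (1 + aBar * Δ)
              * (aLow (t₀ + ((k : ℝ) + 1) * Δ)
                  + bBar * (y ((k : ℤ) + 1 - (N : ℤ)) ω) ^ 2) * Δ))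
        / (2 * (1 + aBar * Δ))) :
    ∀ p : ℝ, 1 ≤ p → ∀ T : ℝ, t₀ < T → ∃ K : ℝ,
      ∫⁻ ω, (⨆ (k : ℕ) (_ : t₀ + (k : ℝ) * Δ ≤ T),
          ENNReal.ofReal ((y (k : ℤ) ω) ^ (2 * p))) ∂μ ≤ ENNReal.ofReal K := by
  intro p hp T hT
  set q : ℝ := 2 * p with hqdef
  have hq1 : (1:ℝ) ≤ q := by simp only [hqdef]; linarith
  have hq0 : (0:ℝ) ≤ q := by linarith
  have hNpos : (0:ℝ) < (N:ℝ) := by exact_mod_cast hN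
  have hΔpos : (0:ℝ) < Δ := by rw [hΔ]; positivity
  have hastar : (0:ℝ) ≤ aStar := le_trans (haLow 0).1 (haLow 0).2
  -- Gaussian moments of the increments
  have hG : ∀ k : ℕ, ∫⁻ ω, ENNReal.ofReal (|ΔW k ω| ^ q) ∂μ < ⊤ := by
    intro k
    have h1 : ∫⁻ ω, ENNReal.ofReal (|ΔW k ω| ^ q) ∂μ
        = ∫⁻ x, ENNReal.ofReal (|x| ^ q) ∂(μ.map (ΔW k)) := by
      rw [lintegral_map (by fun_prop) (hWmeas k)]
    rw [h1, hWlaw k]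
    refine gaussian_moment_lt_top ?_ hq0
    simp only [Ne, Real.toNNReal_eq_zero, not_le]
    exact hΔpos
  obtain ⟨K0, hK0⟩ := hinit p hp
  -- main induction: measurability, nonnegativity and finite q-th moment at every index
  have main : ∀ n : ℕ, Measurable (y ((n : ℤ) - (N : ℤ)))
      ∧ (∀ ω, 0 ≤ y ((n : ℤ) - (N : ℤ)) ω)
      ∧ ∫⁻ ω, ENNReal.ofReal ((y ((n : ℤ) - (N : ℤ)) ω) ^ q) ∂μ < ⊤ := by
    intro n
    induction n using Nat.strong_induction_on with
    | _ n ih =>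
      rcases le_or_gt n N with hn | hn
      · have h1 : -(N:ℤ) ≤ (n:ℤ) - N := by omega
        have h2 : (n:ℤ) - N ≤ 0 := by omega
        exact ⟨hymeas _ h1 h2, hynonneg _ h1 h2,
          lt_of_le_of_lt (hK0 _ h1 h2) ENNReal.ofReal_lt_top⟩
      · obtain ⟨m, hm⟩ : ∃ k : ℕ, n = k + N + 1 := ⟨n - N - 1, by omega⟩
        obtain ⟨hm1, hm2, hm3⟩ := ih (m + N) (by omega)
        obtain ⟨hm1', hm2', hm3'⟩ := ih (m + 1) (by omega)
        have em : ((m + N : ℕ) : ℤ) - N = (m : ℤ) := by push_cast; ring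
        have em' : ((m + 1 : ℕ) : ℤ) - N = (m : ℤ) + 1 - N := by push_cast; ring
        have en : ((n : ℕ) : ℤ) - N = (m : ℤ) + 1 := by rw [hm]; push_cast; ring
        rw [em] at hm1 hm2 hm3
        rw [em'] at hm1' hm2' hm3'
        rw [en, hrec m]
        simp only []
        set t : ℝ := t₀ + ((m:ℝ) + 1) * Δ with ht
        have haL0 : 0 ≤ aLow t := (haLow t).1
        have hd1 : (1:ℝ) ≤ 1 + aBar * Δ := by nlinarith
        have hd0 : (0:ℝ) < 1 + aBar * Δ := by linarith
        have hcnn : ∀ ω, 0 ≤ 4 * (1 + aBar * Δ)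
            * (aLow t + bBar * (y ((m:ℤ) + 1 - N) ω) ^ 2) * Δ := by
          intro ω
          have h2 : 0 ≤ aLow t + bBar * (y ((m:ℤ) + 1 - N) ω) ^ 2 := by positivity
          positivity
        have hmeas : Measurable fun ω =>
            (y (m:ℤ) ω + σBar * ΔW m ω +
              Real.sqrt ((y (m:ℤ) ω + σBar * ΔW m ω) ^ 2
                + 4 * (1 + aBar * Δ) * (aLow t + bBar * (y ((m:ℤ) + 1 - N) ω) ^ 2) * Δ))
              / (2 * (1 + aBar * Δ)) := by
          have hW := hWmeas m
          fun_prop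
        have hnn : ∀ ω, 0 ≤
            (y (m:ℤ) ω + σBar * ΔW m ω +
              Real.sqrt ((y (m:ℤ) ω + σBar * ΔW m ω) ^ 2
                + 4 * (1 + aBar * Δ) * (aLow t + bBar * (y ((m:ℤ) + 1 - N) ω) ^ 2) * Δ))
              / (2 * (1 + aBar * Δ)) :=
          fun ω => step_nonneg (hcnn ω) hd0
        refine ⟨hmeas, hnn, ?_⟩
        -- pointwise domination
        set A : ℝ := Real.sqrt (aStar * Δ) with hA
        set B : ℝ := Real.sqrt (bBar * Δ) with hB
        have hA0 : 0 ≤ A := Real.sqrt_nonneg _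
        have hB0 : 0 ≤ B := Real.sqrt_nonneg _
        have hpt : ∀ ω, ENNReal.ofReal
            (((y (m:ℤ) ω + σBar * ΔW m ω +
              Real.sqrt ((y (m:ℤ) ω + σBar * ΔW m ω) ^ 2
                + 4 * (1 + aBar * Δ) * (aLow t + bBar * (y ((m:ℤ) + 1 - N) ω) ^ 2) * Δ))
              / (2 * (1 + aBar * Δ))) ^ q)
            ≤ ENNReal.ofReal (4 ^ q) *
              (ENNReal.ofReal ((y (m:ℤ) ω) ^ q)
                + ENNReal.ofReal (σBar ^ q) * ENNReal.ofReal (|ΔW m ω| ^ q)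
                + ENNReal.ofReal (A ^ q)
                + ENNReal.ofReal (B ^ q) * ENNReal.ofReal ((y ((m:ℤ) + 1 - N) ω) ^ q)) := by
          intro ω
          set Y : ℝ := y (m:ℤ) ω
          set Y' : ℝ := y ((m:ℤ) + 1 - N) ω
          set W : ℝ := ΔW m ω
          have hY : 0 ≤ Y := hm2 ω
          have hY' : 0 ≤ Y' := hm2' ω
          have hb1 : (Y + σBar * W +
              Real.sqrt ((Y + σBar * W) ^ 2
                + 4 * (1 + aBar * Δ) * (aLow t + bBar * Y' ^ 2) * Δ))
              / (2 * (1 + aBar * Δ))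
              ≤ Y + σBar * |W| + (A + B * Y') := by
            have h := step_bound (Δ := Δ) (aBar := aBar) (aL := aLow t) (b := bBar)
              (yk := Y) (w := σBar * W) (y' := Y') hΔpos.le haBar haL0 hbBar hY hY'
            have e1 : |σBar * W| = σBar * |W| := by
              rw [abs_mul, abs_of_pos hσBar]
            have e2 : Real.sqrt (aLow t * Δ) ≤ A := by
              rw [hA]
              apply Real.sqrt_le_sqrt
              have := (haLow t).2
              nlinarith
            rw [e1] at h
            calc _ ≤ Y + σBar * |W| + (Real.sqrt (aLow t * Δ) + B * Y') := h
              _ ≤ Y + σBar * |W| + (A + B * Y') := by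
                  have := mul_le_mul_of_nonneg_right (le_refl B) hY'
                  linarith [e2]
          have hnn' : 0 ≤ (Y + σBar * W +
              Real.sqrt ((Y + σBar * W) ^ 2
                + 4 * (1 + aBar * Δ) * (aLow t + bBar * Y' ^ 2) * Δ))
              / (2 * (1 + aBar * Δ)) := hnn ω
          have h2 : ((Y + σBar * W +
              Real.sqrt ((Y + σBar * W) ^ 2
                + 4 * (1 + aBar * Δ) * (aLow t + bBar * Y' ^ 2) * Δ))
              / (2 * (1 + aBar * Δ))) ^ q
              ≤ 4 ^ q * (Y ^ q + (σBar * |W|) ^ q + A ^ q + (B * Y') ^ q) := by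
            calc _ ≤ (Y + σBar * |W| + A + B * Y') ^ q := by
                  apply Real.rpow_le_rpow hnn' ?_ hq0
                  calc _ ≤ Y + σBar * |W| + (A + B * Y') := hb1
                    _ = Y + σBar * |W| + A + B * Y' := by ring
              _ ≤ 4 ^ q * (Y ^ q + (σBar * |W|) ^ q + A ^ q + (B * Y') ^ q) :=
                  rpow_add_le4 hq0 hY (by positivity) hA0 (by positivity)
          have e3 : (σBar * |W|) ^ q = σBar ^ q * |W| ^ q :=
            Real.mul_rpow hσBar.le (abs_nonneg W)
          have e4 : (B * Y') ^ q = B ^ q * Y' ^ q := Real.mul_rpow hB0 hY'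
          calc ENNReal.ofReal _ ≤ ENNReal.ofReal
                (4 ^ q * (Y ^ q + σBar ^ q * |W| ^ q + A ^ q + B ^ q * Y' ^ q)) := by
                apply ENNReal.ofReal_le_ofReal
                rw [← e3, ← e4]; exact h2
            _ = _ := by
                rw [ENNReal.ofReal_mul (by positivity),
                  ENNReal.ofReal_add (by positivity) (by positivity),
                  ENNReal.ofReal_add (by positivity) (by positivity),
                  ENNReal.ofReal_add (by positivity) (by positivity),
                  ENNReal.ofReal_mul (by positivity),
                  ENNReal.ofReal_mul (by positivity)]
        -- integrate the bound
        have MF1 : Measurable fun ω => ENNReal.ofReal ((y (m:ℤ) ω) ^ q) := by fun_prop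
        have MF2 : Measurable fun ω => ENNReal.ofReal (|ΔW m ω| ^ q) := by
          have := hWmeas m; fun_prop
        have MF4 : Measurable fun ω =>
            ENNReal.ofReal ((y ((m:ℤ) + 1 - N) ω) ^ q) := by fun_prop
        calc ∫⁻ ω, ENNReal.ofReal
              (((y (m:ℤ) ω + σBar * ΔW m ω +
                Real.sqrt ((y (m:ℤ) ω + σBar * ΔW m ω) ^ 2
                  + 4 * (1 + aBar * Δ) * (aLow t + bBar * (y ((m:ℤ) + 1 - N) ω) ^ 2) * Δ))
                / (2 * (1 + aBar * Δ))) ^ q) ∂μ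
            ≤ ∫⁻ ω, ENNReal.ofReal (4 ^ q) *
              (ENNReal.ofReal ((y (m:ℤ) ω) ^ q)
                + ENNReal.ofReal (σBar ^ q) * ENNReal.ofReal (|ΔW m ω| ^ q)
                + ENNReal.ofReal (A ^ q)
                + ENNReal.ofReal (B ^ q)
                    * ENNReal.ofReal ((y ((m:ℤ) + 1 - N) ω) ^ q)) ∂μ :=
              lintegral_mono hpt
          _ = ENNReal.ofReal (4 ^ q) * ∫⁻ ω,
              (ENNReal.ofReal ((y (m:ℤ) ω) ^ q)
                + ENNReal.ofReal (σBar ^ q) * ENNReal.ofReal (|ΔW m ω| ^ q)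
                + ENNReal.ofReal (A ^ q)
                + ENNReal.ofReal (B ^ q)
                    * ENNReal.ofReal ((y ((m:ℤ) + 1 - N) ω) ^ q)) ∂μ :=
              lintegral_const_mul' _ _ ENNReal.ofReal_ne_top
          _ < ⊤ := by
              rw [lintegral_add_left (by fun_prop),
                lintegral_add_left (by fun_prop),
                lintegral_add_left MF1,
                lintegral_const_mul' _ _ ENNReal.ofReal_ne_top,
                lintegral_const_mul' _ _ ENNReal.ofReal_ne_top,
                lintegral_const]
              refine ENNReal.mul_lt_top ENNReal.ofReal_lt_top ?_
              refine ENNReal.add_lt_top.mpr ⟨?_, ?_⟩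
              · refine ENNReal.add_lt_top.mpr ⟨?_, ?_⟩
                · refine ENNReal.add_lt_top.mpr ⟨hm3, ?_⟩
                  exact ENNReal.mul_lt_top ENNReal.ofReal_lt_top (hG m)
                · exact ENNReal.mul_lt_top ENNReal.ofReal_lt_top (by simp)
              · exact ENNReal.mul_lt_top ENNReal.ofReal_lt_top hm3'
  -- moments for nonnegative indices
  have main' : ∀ k : ℕ, Measurable (y (k:ℤ))
      ∧ ∫⁻ ω, ENNReal.ofReal ((y (k:ℤ) ω) ^ q) ∂μ < ⊤ := by
    intro k
    have h := main (k + N)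
    have e : ((k + N : ℕ) : ℤ) - N = (k : ℤ) := by push_cast; ring
    rw [e] at h
    exact ⟨h.1, h.2.2⟩
  set K₀ : ℕ := Nat.floor ((T - t₀) / Δ) with hK₀
  have hfin : ∫⁻ ω, (⨆ (k : ℕ) (_ : t₀ + (k:ℝ) * Δ ≤ T),
      ENNReal.ofReal ((y (k:ℤ) ω) ^ q)) ∂μ < ⊤ := by
    have hpt : ∀ ω, (⨆ (k : ℕ) (_ : t₀ + (k:ℝ) * Δ ≤ T), ENNReal.ofReal ((y (k:ℤ) ω) ^ q))
        ≤ ∑ j ∈ Finset.range (K₀ + 1), ENNReal.ofReal ((y (j:ℤ) ω) ^ q) := by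
      intro ω
      refine iSup_le fun k => iSup_le fun hk => ?_
      have hkK : k ≤ K₀ := by
        apply Nat.le_floor
        rw [le_div_iff₀ hΔpos]
        linarith
      exact Finset.single_le_sum (f := fun j : ℕ => ENNReal.ofReal ((y (j:ℤ) ω) ^ q))
        (fun i _ => zero_le) (Finset.mem_range_succ_iff.mpr hkK)
    calc ∫⁻ ω, (⨆ (k : ℕ) (_ : t₀ + (k:ℝ) * Δ ≤ T), ENNReal.ofReal ((y (k:ℤ) ω) ^ q)) ∂μ
        ≤ ∫⁻ ω, ∑ j ∈ Finset.range (K₀+1), ENNReal.ofReal ((y (j:ℤ) ω) ^ q) ∂μ :=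
          lintegral_mono hpt
      _ = ∑ j ∈ Finset.range (K₀+1), ∫⁻ ω, ENNReal.ofReal ((y (j:ℤ) ω) ^ q) ∂μ :=
          lintegral_finset_sum _ (fun j _ => by have := (main' j).1; fun_prop)
      _ < ⊤ := by
          apply ENNReal.sum_lt_top.mpr
          exact fun j _ => (main' j).2
  exact ⟨(∫⁻ ω, (⨆ (k : ℕ) (_ : t₀ + (k:ℝ) * Δ ≤ T),
      ENNReal.ofReal ((y (k:ℤ) ω) ^ q)) ∂μ).toReal,
    le_of_eq (ENNReal.ofReal_toReal hfin.ne).symm⟩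
end

section
/- Let a̲ : ℝ → ℝ be a function with a̲(t) ≥ 0 for all t, let ā ≥ 0, b̄ ≥ 0, and define f(t, y, z) = a̲(t)/y − ā·y + b̄·z²/y for y > 0. Fix Δ > 0, N ≥ 1, an index m ∈ ℤ, and time points t_k. Let (Y_k)_{k ≥ m−N} and (y_k)_{k ≥ m−N} be sequences of positive reals, let (r_k) be reals, and set e_k := Y_k − y_k. Assume that for every k with m ≤ k < m+N one has e_{k+1} = e_k + [f(t_{k+1}, Y_{k+1}, Y_{k+1−N}) − f(t_{k+1}, y_{k+1}, y_{k+1−N})]·Δ + r_k. Then max_{m ≤ k ≤ m+N} |e_k| ≤ b̄·Δ·Σ_{k=m}^{m+N−1} |Y²_{k+1−N} − y²_{k+1−N}| / Y_{k+1} + 2·Σ_{k=m}^{m+N−1} |r_k| + max_{m−N ≤ k ≤ m} |e_k|. -/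
lemma sum_Icc_top_aux (g : ℤ → ℝ) {a b : ℤ} (h : a ≤ b + 1) :
    ∑ k ∈ Finset.Icc a (b + 1), g k = ∑ k ∈ Finset.Icc a b, g k + g (b + 1) := by
  have hins : Finset.Icc a (b + 1) = insert (b + 1) (Finset.Icc a b) := by
    ext x
    simp only [Finset.mem_Icc, Finset.mem_insert]
    omega
  rw [hins, Finset.sum_insert (by simp only [Finset.mem_Icc]; omega)]
  ring

/-- Deterministic block error estimate (heart of Proposition 4.2): the error of the
drift-implicit Euler scheme over one delay block is controlled by the error over the
previous block, the local errors, and the errors of the delayed squared values. -/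
theorem block_error_estimate
    (aLow : ℝ → ℝ) (ha : ∀ t, 0 ≤ aLow t)
    (aBar bBar : ℝ) (haBar : 0 ≤ aBar) (hbBar : 0 ≤ bBar)
    (f : ℝ → ℝ → ℝ → ℝ)
    (hf : ∀ t y z, f t y z = aLow t / y - aBar * y + bBar * z ^ 2 / y)
    (Δ : ℝ) (hΔ : 0 < Δ) (N : ℕ) (hN : 1 ≤ N) (m : ℤ) (t : ℤ → ℝ)
    (Y y : ℤ → ℝ) (r : ℤ → ℝ) (e : ℤ → ℝ)
    (hY : ∀ k : ℤ, m - N ≤ k → 0 < Y k)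
    (hy : ∀ k : ℤ, m - N ≤ k → 0 < y k)
    (he : ∀ k : ℤ, e k = Y k - y k)
    (hrec : ∀ k : ℤ, m ≤ k → k < m + N →
      e (k + 1) = e k
        + (f (t (k + 1)) (Y (k + 1)) (Y (k + 1 - N))
            - f (t (k + 1)) (y (k + 1)) (y (k + 1 - N))) * Δ
        + r k) :
    (Finset.Icc m (m + (N : ℤ))).sup'
        (Finset.nonempty_Icc.mpr (by omega)) (fun k => |e k|) ≤
      bBar * Δ * ∑ k ∈ Finset.Icc m (m + (N : ℤ) - 1),
          |(Y (k + 1 - N)) ^ 2 - (y (k + 1 - N)) ^ 2| / Y (k + 1)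
        + 2 * ∑ k ∈ Finset.Icc m (m + (N : ℤ) - 1), |r k|
        + (Finset.Icc (m - (N : ℤ)) m).sup'
            (Finset.nonempty_Icc.mpr (by omega))
            (fun k => |e k|) := by
  set g : ℤ → ℝ := fun k =>
    bBar * Δ * (|(Y (k + 1 - N)) ^ 2 - (y (k + 1 - N)) ^ 2| / Y (k + 1)) + |r k| with hg
  have hgnn : ∀ k : ℤ, m ≤ k → k < m + N → 0 ≤ g k := by
    intro k hk1 hk2
    have hY1 : 0 < Y (k + 1) := hY _ (by omega)
    have : 0 ≤ bBar * Δ * (|(Y (k + 1 - N)) ^ 2 - (y (k + 1 - N)) ^ 2| / Y (k + 1)) :=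
      mul_nonneg (mul_nonneg hbBar hΔ.le) (div_nonneg (abs_nonneg _) hY1.le)
    simp only [hg]
    positivity
  -- per-step estimate
  have step : ∀ k : ℤ, m ≤ k → k < m + N → |e (k + 1)| ≤ |e k| + g k := by
    intro k hk1 hk2
    have hY1 : 0 < Y (k + 1) := hY _ (by omega)
    have hy1 : 0 < y (k + 1) := hy _ (by omega)
    have hZ : 0 < Y (k + 1 - N) := hY _ (by omega)
    have hz : 0 < y (k + 1 - N) := hy _ (by omega)
    set Y1 := Y (k + 1)
    set y1 := y (k + 1)
    set Z := Y (k + 1 - N)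
    set z := y (k + 1 - N)
    set e1 := e (k + 1) with he1def
    have he1 : e1 = Y1 - y1 := he _
    set c : ℝ := |Z ^ 2 - z ^ 2| / Y1 with hc
    have hcnn : 0 ≤ c := div_nonneg (abs_nonneg _) hY1.le
    -- one-sided estimate
    have hD : e1 * (f (t (k + 1)) Y1 Z - f (t (k + 1)) y1 z) ≤ bBar * c * |e1| := by
      rw [hf, hf, hc]
      have habs : (Z ^ 2 - z ^ 2) * e1 ≤ |Z ^ 2 - z ^ 2| * |e1| := by
        calc (Z ^ 2 - z ^ 2) * e1 ≤ |(Z ^ 2 - z ^ 2) * e1| := le_abs_self _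
        _ = |Z ^ 2 - z ^ 2| * |e1| := abs_mul _ _
      have hkey : e1 * (aLow (t (k + 1)) / Y1 - aBar * Y1 + bBar * Z ^ 2 / Y1 -
          (aLow (t (k + 1)) / y1 - aBar * y1 + bBar * z ^ 2 / y1)) * (Y1 * y1)
          ≤ bBar * |Z ^ 2 - z ^ 2| * |e1| * y1 := by
        have hexp : e1 * (aLow (t (k + 1)) / Y1 - aBar * Y1 + bBar * Z ^ 2 / Y1 -
            (aLow (t (k + 1)) / y1 - aBar * y1 + bBar * z ^ 2 / y1)) * (Y1 * y1)
            = -(aLow (t (k + 1)) * e1 ^ 2) - aBar * e1 ^ 2 * (Y1 * y1)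
              + bBar * ((Z ^ 2 - z ^ 2) * e1 * y1 - z ^ 2 * e1 ^ 2) := by
          field_simp
          rw [he1]
          ring
        rw [hexp]
        have h1 : 0 ≤ aLow (t (k + 1)) * e1 ^ 2 := mul_nonneg (ha _) (sq_nonneg _)
        have h2 : 0 ≤ aBar * e1 ^ 2 * (Y1 * y1) :=
          mul_nonneg (mul_nonneg haBar (sq_nonneg _)) (mul_pos hY1 hy1).le
        have h3 : bBar * ((Z ^ 2 - z ^ 2) * e1 * y1 - z ^ 2 * e1 ^ 2)
            ≤ bBar * |Z ^ 2 - z ^ 2| * |e1| * y1 := by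
          have h4 : (Z ^ 2 - z ^ 2) * e1 * y1 - z ^ 2 * e1 ^ 2
              ≤ |Z ^ 2 - z ^ 2| * |e1| * y1 := by
            nlinarith [mul_nonneg (sq_nonneg z) (sq_nonneg e1),
              mul_le_mul_of_nonneg_right habs hy1.le]
          nlinarith [mul_le_mul_of_nonneg_left h4 hbBar]
        linarith
      have h5 : bBar * (|Z ^ 2 - z ^ 2| / Y1) * |e1|
          = (bBar * |Z ^ 2 - z ^ 2| * |e1| * y1) / (Y1 * y1) := by
        field_simp
      rw [h5, le_div_iff₀ (mul_pos hY1 hy1)]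
      exact hkey
    -- recursion squared
    have hr' : e1 = e k + (f (t (k + 1)) Y1 Z - f (t (k + 1)) y1 z) * Δ + r k :=
      hrec k hk1 hk2
    have hsq : e1 * e1 ≤ |e1| * (|e k| + bBar * Δ * c + |r k|) := by
      have h1 : e1 * e k ≤ |e1| * |e k| := by
        calc e1 * e k ≤ |e1 * e k| := le_abs_self _
        _ = |e1| * |e k| := abs_mul _ _
      have h2 : e1 * r k ≤ |e1| * |r k| := by
        calc e1 * r k ≤ |e1 * r k| := le_abs_self _
        _ = |e1| * |r k| := abs_mul _ _
      have h3 : e1 * ((f (t (k + 1)) Y1 Z - f (t (k + 1)) y1 z) * Δ)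
          ≤ bBar * c * |e1| * Δ := by
        have := mul_le_mul_of_nonneg_right hD hΔ.le
        nlinarith [this]
      calc e1 * e1 = e1 * e k + e1 * ((f (t (k + 1)) Y1 Z - f (t (k + 1)) y1 z) * Δ)
            + e1 * r k := by rw [hr']; ring
        _ ≤ |e1| * |e k| + bBar * c * |e1| * Δ + |e1| * |r k| := by linarith
        _ = |e1| * (|e k| + bBar * Δ * c + |r k|) := by ring
    have hgk : g k = bBar * Δ * c + |r k| := rfl
    rw [hgk]
    rcases eq_or_ne e1 0 with h0 | h0
    · rw [h0, abs_zero]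
      have : 0 ≤ bBar * Δ * c := mul_nonneg (mul_nonneg hbBar hΔ.le) hcnn
      positivity
    · have hpos : 0 < |e1| := abs_pos.mpr h0
      have h6 : |e1| * |e1| ≤ |e1| * (|e k| + (bBar * Δ * c + |r k|)) := by
        have heq : |e1| * |e1| = e1 * e1 := by rw [← abs_mul, abs_mul_self]
        rw [heq]; linarith [hsq]
      have := le_of_mul_le_mul_left h6 hpos
      linarith
  -- telescoping
  have key : ∀ n : ℕ, n ≤ N →
      |e (m + n)| ≤ |e m| + ∑ k ∈ Finset.Icc m (m + (n : ℤ) - 1), g k := by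
    intro n
    induction n with
    | zero =>
      intro _
      have hemp : Finset.Icc m (m + ((0 : ℕ) : ℤ) - 1) = ∅ :=
        Finset.Icc_eq_empty (by omega)
      rw [hemp]
      simp
    | succ n ih =>
      intro hn
      have h1 := ih (by omega)
      have h2 := step (m + n) (by omega) (by omega)
      have harg : m + (((n + 1 : ℕ)) : ℤ) = (m + n) + 1 := by push_cast; ring
      have harg2 : m + (n : ℤ) + 1 - 1 = (m + (n : ℤ) - 1) + 1 := by ring
      rw [harg, harg2, sum_Icc_top_aux g (by omega)]
      have heq2 : m + (n : ℤ) - 1 + 1 = m + n := by ring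
      rw [heq2]
      linarith
  -- finish
  apply Finset.sup'_le
  intro k hk
  rw [Finset.mem_Icc] at hk
  obtain ⟨hk1, hk2⟩ := hk
  have h1 : |e k| ≤ |e m| + ∑ j ∈ Finset.Icc m (k - 1), g j := by
    have hn : ((k - m).toNat : ℤ) = k - m := Int.toNat_of_nonneg (by omega)
    have hkey := key (k - m).toNat (by omega)
    rw [hn] at hkey
    have e1 : m + (k - m) = k := by ring
    rw [e1] at hkey
    exact hkey
  have h2 : ∑ j ∈ Finset.Icc m (k - 1), g j ≤ ∑ j ∈ Finset.Icc m (m + N - 1), g j := by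
    apply Finset.sum_le_sum_of_subset_of_nonneg
    · apply Finset.Icc_subset_Icc_right; omega
    · intro j hj _
      rw [Finset.mem_Icc] at hj
      exact hgnn j hj.1 (by omega)
  have h3 : ∑ j ∈ Finset.Icc m (m + N - 1), g j
      = bBar * Δ * ∑ j ∈ Finset.Icc m (m + (N : ℤ) - 1),
          |(Y (j + 1 - N)) ^ 2 - (y (j + 1 - N)) ^ 2| / Y (j + 1)
        + ∑ j ∈ Finset.Icc m (m + (N : ℤ) - 1), |r j| := by
    rw [Finset.mul_sum, ← Finset.sum_add_distrib]
  have h4 : |e m| ≤ (Finset.Icc (m - (N : ℤ)) m).sup'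
      (Finset.nonempty_Icc.mpr (by omega)) (fun k => |e k|) := by
    exact Finset.le_sup' (fun k => |e k|) (by rw [Finset.mem_Icc]; omega)
  have h5 : 0 ≤ ∑ j ∈ Finset.Icc m (m + (N : ℤ) - 1), |r j| :=
    Finset.sum_nonneg fun j _ => abs_nonneg _
  linarith
end

section
/- For all reals p > 0, L > 0, ζ > 0 and any real g, the following identity of (possibly infinite) integrals of nonnegative functions holds: ∫₀^∞ u^{p−1}·(2uL + 1)^{−g}·exp(−u·L·ζ/(2uL + 1)) du = (L·ζ)^{−p} · ∫₀^{ζ/2} y^{p−1}·(1 − 2y/ζ)^{g−p−1}·e^{−y} dy. -/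
open MeasureTheory Set

theorem lintegral_image_eq_lintegral_abs_deriv_mul' {s : Set ℝ} {f : ℝ → ℝ} {f' : ℝ → ℝ}
    (hs : MeasurableSet s) (hf' : ∀ x ∈ s, HasDerivWithinAt f (f' x) s x)
    (hf : InjOn f s) (g : ℝ → ENNReal) :
    ∫⁻ x in f '' s, g x = ∫⁻ x in s, ENNReal.ofReal |f' x| * g (f x) := by
  simpa only [ContinuousLinearMap.det_toSpanSingleton] using
    lintegral_image_eq_lintegral_abs_det_fderiv_mul volume hs
      (fun x hx => (hf' x hx).hasFDerivWithinAt) hf g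

/-- Change-of-variable identity (via `y = u·L·ζ/(2uL+1)`) from the proof of Lemma A
in the appendix, as an identity of (possibly infinite) Lebesgue integrals of
nonnegative functions. -/
theorem cir_laplace_change_of_variable
    (p L ζ g : ℝ) (hp : 0 < p) (hL : 0 < L) (hζ : 0 < ζ) :
    ∫⁻ u in Set.Ioi (0 : ℝ),
        ENNReal.ofReal (u ^ (p - 1) * (2 * u * L + 1) ^ (-g)
          * Real.exp (-(u * L * ζ) / (2 * u * L + 1))) =
      ENNReal.ofReal ((L * ζ) ^ (-p)) *
        ∫⁻ y in Set.Ioo (0 : ℝ) (ζ / 2),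
          ENNReal.ofReal (y ^ (p - 1) * (1 - 2 * y / ζ) ^ (g - p - 1)
            * Real.exp (-y)) := by
  set f : ℝ → ℝ := fun u => u * L * ζ / (2 * u * L + 1) with hf_def
  set f' : ℝ → ℝ := fun u => L * ζ / (2 * u * L + 1) ^ 2 with hf'_def
  have hD : ∀ u : ℝ, 0 < u → (0:ℝ) < 2 * u * L + 1 := fun u hu => by positivity
  -- derivative
  have hderiv : ∀ u ∈ Ioi (0:ℝ), HasDerivWithinAt f (f' u) (Ioi 0) u := by
    intro u hu
    have hDu := hD u hu
    have h1 : HasDerivAt (fun u : ℝ => u * L * ζ) (L * ζ) u := by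
      simpa using ((hasDerivAt_id u).mul_const L).mul_const ζ
    have h2 : HasDerivAt (fun u : ℝ => 2 * u * L + 1) (2 * L) u := by
      simpa using (((hasDerivAt_id u).const_mul 2).mul_const L).add_const 1
    have := h1.div h2 (ne_of_gt hDu)
    have heq : (L * ζ * (2 * u * L + 1) - u * L * ζ * (2 * L)) / (2 * u * L + 1) ^ 2 = f' u := by
      field_simp [hf'_def]; ring
    rw [heq] at this
    exact this.hasDerivWithinAt
  -- injectivity
  have hinj : InjOn f (Ioi 0) := by
    intro a ha b hb hab
    have hDa := hD a ha
    have hDb := hD b hb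
    simp only [hf_def] at hab
    field_simp at hab
    rw [div_eq_div_iff (ne_of_gt (by linarith)) (ne_of_gt (by linarith))] at hab
    nlinarith [mul_pos hL hζ]
  -- image
  have himg : f '' Ioi 0 = Ioo 0 (ζ / 2) := by
    ext y
    constructor
    · rintro ⟨u, hu, rfl⟩
      have hDu := hD u hu
      have hu' : (0:ℝ) < u := hu
      constructor
      · exact div_pos (by positivity) hDu
      · rw [div_lt_iff₀ hDu]
        nlinarith
    · rintro ⟨hy0, hy2⟩
      have ht : (0:ℝ) < ζ - 2 * y := by linarith
      refine ⟨y / (L * (ζ - 2 * y)), ?_, ?_⟩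
      · exact div_pos hy0 (by positivity)
      · simp only [hf_def]
        rw [div_eq_iff (ne_of_gt (hD _ (div_pos hy0 (by positivity))))]
        field_simp [ht.ne', show ζ - y * 2 ≠ 0 by linarith]
        ring
  rw [← himg, lintegral_image_eq_lintegral_abs_deriv_mul' measurableSet_Ioi hderiv hinj,
    ← lintegral_const_mul' _ _ ENNReal.ofReal_ne_top]
  apply setLIntegral_congr_fun measurableSet_Ioi
  intro u hu
  beta_reduce
  have hu' : (0:ℝ) < u := hu
  have hDu := hD u hu'
  have hfu : f u = u * L * ζ / (2 * u * L + 1) := rfl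
  have h1m : 1 - 2 * f u / ζ = 1 / (2 * u * L + 1) := by
    rw [hfu]; field_simp; ring
  have hf'abs : |f' u| = L * ζ / (2 * u * L + 1) ^ 2 := abs_of_pos (by positivity)
  rw [← ENNReal.ofReal_mul (by positivity), ← ENNReal.ofReal_mul (by positivity)]
  congr 1
  rw [hf'abs, h1m, hfu]
  have hLζ : (0:ℝ) < L * ζ := by positivity
  have e1 : (u * L * ζ / (2 * u * L + 1)) ^ (p - 1)
      = u ^ (p-1) * (L*ζ) ^ (p-1) * ((2*u*L+1) ^ (p-1))⁻¹ := by
    rw [Real.div_rpow (by positivity) hDu.le, ← Real.mul_rpow hu'.le hLζ.le,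
      div_eq_mul_inv, mul_assoc]
  have e2 : ((1:ℝ) / (2 * u * L + 1)) ^ (g - p - 1)
      = ((2*u*L+1) ^ (g-p-1))⁻¹ := by
    rw [one_div, ← Real.inv_rpow hDu.le]
  rw [e1, e2]
  have A : L * ζ * (L*ζ) ^ (p-1) = (L*ζ) ^ p := by
    nth_rewrite 1 [← Real.rpow_one (L*ζ)]
    rw [← Real.rpow_add hLζ]; ring_nf
  have B : ((2*u*L+1):ℝ) ^ (2:ℕ) * (2*u*L+1) ^ (p-1) * (2*u*L+1) ^ (g-p-1)
      = (2*u*L+1) ^ g := by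
    rw [← Real.rpow_natCast (2*u*L+1) 2, ← Real.rpow_add hDu, ← Real.rpow_add hDu]
    norm_num
    ring_nf
  have hDgpos : (0:ℝ) < (2*u*L+1) ^ g := Real.rpow_pos_of_pos hDu g
  have hDppos : (0:ℝ) < (2*u*L+1) ^ (p-1) := Real.rpow_pos_of_pos hDu _
  have hDgp : (0:ℝ) < (2*u*L+1) ^ (g-p-1) := Real.rpow_pos_of_pos hDu _
  have hLp : (0:ℝ) < (L*ζ) ^ p := Real.rpow_pos_of_pos hLζ p
  rw [neg_div, Real.rpow_neg hLζ.le, Real.rpow_neg hDu.le, ← A, ← B]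
  field_simp
end

section
/- Let p ≥ 1, ζ > 0, and let g be a real number with p < g < p + 1. Then ∫₀^{ζ/2} y^{p−1}·(1 − 2y/ζ)^{g−p−1}·e^{−y} dy ≤ L_p·Γ(p), where L_p = 2^{p+1−g} + 2^{2p−g}·p^p·e^{−p}/(Γ(p)·(g − p)) and Γ denotes the Gamma function. -/
open MeasureTheory Set

/-- Combined integral estimate of Lemma A, cases 2 and 3: when `p ≥ 1` and
`p < g < p + 1`, the integral `∫₀^{ζ/2} y^{p−1}(1 − 2y/ζ)^{g−p−1}e^{−y} dy`
is at most `L_p·Γ(p)` with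
`L_p = 2^{p+1−g} + 2^{2p−g}·p^p·e^{−p}/(Γ(p)·(g − p))`. -/
theorem cir_integral_estimate_combined
    (p ζ g : ℝ) (hp : 1 ≤ p) (hζ : 0 < ζ) (hg₁ : p < g) (hg₂ : g < p + 1) :
    ∫⁻ y in Set.Ioo (0 : ℝ) (ζ / 2),
        ENNReal.ofReal (y ^ (p - 1) * (1 - 2 * y / ζ) ^ (g - p - 1) * Real.exp (-y)) ≤
      ENNReal.ofReal
        ((2 ^ (p + 1 - g)
            + 2 ^ (2 * p - g) * p ^ p * Real.exp (-p) / (Real.Gamma p * (g - p)))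
          * Real.Gamma p) := by
  have hp0 : 0 < p := lt_of_lt_of_le one_pos hp
  have hΓ : 0 < Real.Gamma p := Real.Gamma_pos_of_pos hp0
  have hgp : 0 < g - p := by linarith
  have hr1 : (-1:ℝ) < g - p - 1 := by linarith
  have hr0 : g - p - 1 ≤ 0 := by linarith
  have hζ4 : (0:ℝ) < ζ/4 := by linarith
  have h42 : ζ/4 < ζ/2 := by linarith
  set C : ℝ := 4/ζ * (p ^ p * Real.exp (-p)) with hC
  have hC0 : 0 ≤ C := by positivity
  -- the Gamma lintegral
  have hGammaL : ∫⁻ y in Set.Ioi (0:ℝ),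
      ENNReal.ofReal (Real.exp (-y) * y ^ (p-1)) = ENNReal.ofReal (Real.Gamma p) := by
    have hnn : 0 ≤ᵐ[volume.restrict (Set.Ioi (0:ℝ))]
        fun y => Real.exp (-y) * y ^ (p-1) := by
      filter_upwards [ae_restrict_mem measurableSet_Ioi] with y hy
      have : (0:ℝ) < y := hy
      positivity
    have := MeasureTheory.ofReal_integral_eq_lintegral_ofReal
      (Real.GammaIntegral_convergent hp0) hnn
    rw [← Real.Gamma_eq_integral hp0] at this
    exact this.symm
  -- Piece A
  have hA : ∫⁻ y in Set.Ioc (0:ℝ) (ζ/4),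
      ENNReal.ofReal (y ^ (p-1) * (1 - 2*y/ζ) ^ (g-p-1) * Real.exp (-y))
        ≤ ENNReal.ofReal (2 ^ (p+1-g) * Real.Gamma p) := by
    have step1 : ∀ y ∈ Set.Ioc (0:ℝ) (ζ/4),
        ENNReal.ofReal (y ^ (p-1) * (1 - 2*y/ζ) ^ (g-p-1) * Real.exp (-y))
          ≤ ENNReal.ofReal ((2:ℝ) ^ (p+1-g)) * ENNReal.ofReal (Real.exp (-y) * y ^ (p-1)) := by
      intro y hy
      have hy0 : (0:ℝ) < y := hy.1
      rw [← ENNReal.ofReal_mul (by positivity)]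
      apply ENNReal.ofReal_le_ofReal
      have h2y : 2*y/ζ ≤ 1/2 := by
        rw [div_le_div_iff₀ hζ (by norm_num : (0:ℝ) < 2)]
        linarith [hy.2]
      have h1 : (1:ℝ)/2 ≤ 1 - 2*y/ζ := by linarith
      have h2 : (1 - 2*y/ζ) ^ (g-p-1) ≤ ((1:ℝ)/2) ^ (g-p-1) :=
        Real.rpow_le_rpow_of_nonpos (by norm_num) h1 hr0
      have h3 : ((1:ℝ)/2) ^ (g-p-1) = (2:ℝ) ^ (p+1-g) := by
        rw [one_div, Real.inv_rpow (by norm_num : (0:ℝ) ≤ 2),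
          show p+1-g = -(g-p-1) by ring, Real.rpow_neg (by norm_num : (0:ℝ) ≤ 2)]
      calc y ^ (p-1) * (1 - 2*y/ζ) ^ (g-p-1) * Real.exp (-y)
          ≤ y ^ (p-1) * ((2:ℝ) ^ (p+1-g)) * Real.exp (-y) := by
            apply mul_le_mul_of_nonneg_right _ (Real.exp_nonneg _)
            exact mul_le_mul_of_nonneg_left (h3 ▸ h2) (by positivity)
        _ = (2:ℝ) ^ (p+1-g) * (Real.exp (-y) * y ^ (p-1)) := by ring
    calc ∫⁻ y in Set.Ioc (0:ℝ) (ζ/4),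
        ENNReal.ofReal (y ^ (p-1) * (1 - 2*y/ζ) ^ (g-p-1) * Real.exp (-y))
        ≤ ∫⁻ y in Set.Ioc (0:ℝ) (ζ/4),
            ENNReal.ofReal ((2:ℝ) ^ (p+1-g)) * ENNReal.ofReal (Real.exp (-y) * y ^ (p-1)) :=
          setLIntegral_mono' measurableSet_Ioc step1
      _ ≤ ∫⁻ y in Set.Ioi (0:ℝ),
            ENNReal.ofReal ((2:ℝ) ^ (p+1-g)) * ENNReal.ofReal (Real.exp (-y) * y ^ (p-1)) :=
          lintegral_mono_set Set.Ioc_subset_Ioi_self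
      _ = ENNReal.ofReal ((2:ℝ) ^ (p+1-g)) *
            ∫⁻ y in Set.Ioi (0:ℝ), ENNReal.ofReal (Real.exp (-y) * y ^ (p-1)) :=
          lintegral_const_mul' _ _ ENNReal.ofReal_ne_top
      _ = ENNReal.ofReal ((2:ℝ) ^ (p+1-g)) * ENNReal.ofReal (Real.Gamma p) := by rw [hGammaL]
      _ = ENNReal.ofReal ((2:ℝ) ^ (p+1-g) * Real.Gamma p) :=
          (ENNReal.ofReal_mul (by positivity)).symm
  -- integrability of the singular factor on the right piece
  have hfun : (fun y : ℝ => (1 - 2/ζ * y) ^ (g-p-1)) =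
      (fun y : ℝ => (1 - 2*y/ζ) ^ (g-p-1)) := by
    funext y; rw [show 2/ζ * y = 2*y/ζ by ring]
  have hIB : IntegrableOn (fun y => (1 - 2*y/ζ) ^ (g-p-1)) (Set.Ioo (ζ/4) (ζ/2)) := by
    have h1 : IntervalIntegrable (fun x : ℝ => x ^ (g-p-1)) volume 0 (1/2) :=
      intervalIntegral.intervalIntegrable_rpow' hr1
    have h2 := h1.comp_sub_left 1
    have h3 := h2.comp_mul_left (c := 2/ζ)
    rw [show (1-(0:ℝ))/(2/ζ) = ζ/2 by field_simp; ring,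
        show ((1:ℝ)-1/2)/(2/ζ) = ζ/4 by rw [div_div_eq_mul_div]; ring_nf] at h3
    have h4 := h3.symm
    rw [intervalIntegrable_iff, Set.uIoc_of_le (le_of_lt h42)] at h4
    rw [hfun] at h4
    exact h4.mono_set Set.Ioo_subset_Ioc_self
  -- value of the singular integral
  have hval : ∫ y in Set.Ioo (ζ/4) (ζ/2), (1 - 2*y/ζ) ^ (g-p-1)
      = ζ/2 * (((1:ℝ)/2) ^ (g-p) / (g-p)) := by
    rw [← MeasureTheory.integral_Ioc_eq_integral_Ioo,
      ← intervalIntegral.integral_of_le (le_of_lt h42)]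
    have hc : (-2/ζ) ≠ 0 := div_ne_zero (by norm_num) (ne_of_gt hζ)
    have key := intervalIntegral.integral_comp_mul_add
      (a := ζ/4) (b := ζ/2) (fun x : ℝ => x ^ (g-p-1)) hc 1
    have e0 : ∀ y : ℝ, -2/ζ * y + 1 = 1 - 2*y/ζ := fun y => by ring
    simp_rw [e0] at key
    rw [key, show 1 - 2*(ζ/4)/ζ = (1/2:ℝ) by field_simp; ring,
      show 1 - 2*(ζ/2)/ζ = (0:ℝ) by field_simp; ring,
      integral_rpow (Or.inl hr1),
      show g - p - 1 + 1 = g - p by ring,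
      Real.zero_rpow (ne_of_gt hgp), smul_eq_mul]
    field_simp
    ring
  have hnnB : 0 ≤ᵐ[volume.restrict (Set.Ioo (ζ/4) (ζ/2))]
      fun y => (1 - 2*y/ζ) ^ (g-p-1) := by
    filter_upwards [ae_restrict_mem measurableSet_Ioo] with y hy
    have h2y : 2*y/ζ ≤ 1 := by rw [div_le_one hζ]; linarith [hy.2]
    exact Real.rpow_nonneg (by linarith) _
  have hBval : ∫⁻ y in Set.Ioo (ζ/4) (ζ/2), ENNReal.ofReal ((1 - 2*y/ζ) ^ (g-p-1))
      = ENNReal.ofReal (ζ/2 * (((1:ℝ)/2) ^ (g-p) / (g-p))) := by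
    rw [← hval]
    exact (MeasureTheory.ofReal_integral_eq_lintegral_ofReal hIB hnnB).symm
  -- Piece B
  have hB : ∫⁻ y in Set.Ioo (ζ/4) (ζ/2),
      ENNReal.ofReal (y ^ (p-1) * (1 - 2*y/ζ) ^ (g-p-1) * Real.exp (-y))
        ≤ ENNReal.ofReal (C * (ζ/2 * (((1:ℝ)/2) ^ (g-p) / (g-p)))) := by
    have step1 : ∀ y ∈ Set.Ioo (ζ/4) (ζ/2),
        ENNReal.ofReal (y ^ (p-1) * (1 - 2*y/ζ) ^ (g-p-1) * Real.exp (-y))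
          ≤ ENNReal.ofReal C * ENNReal.ofReal ((1 - 2*y/ζ) ^ (g-p-1)) := by
      intro y hy
      have hy0 : (0:ℝ) < y := lt_trans hζ4 hy.1
      have h2y : 2*y/ζ ≤ 1 := by rw [div_le_one hζ]; linarith [hy.2]
      have hu : (0:ℝ) ≤ 1 - 2*y/ζ := by linarith
      rw [← ENNReal.ofReal_mul hC0]
      apply ENNReal.ofReal_le_ofReal
      -- key bound: y^p e^{-y} ≤ p^p e^{-p}
      have hlog : Real.log (y/p) ≤ y/p - 1 := Real.log_le_sub_one_of_pos (by positivity)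
      rw [Real.log_div (ne_of_gt hy0) (ne_of_gt hp0)] at hlog
      have hmul := mul_le_mul_of_nonneg_left hlog (le_of_lt hp0)
      have hyp : p * (y/p - 1) = y - p := by field_simp
      have hkey : y ^ p * Real.exp (-y) ≤ p ^ p * Real.exp (-p) := by
        rw [Real.rpow_def_of_pos hy0, Real.rpow_def_of_pos hp0,
          ← Real.exp_add, ← Real.exp_add]
        apply Real.exp_le_exp.2
        nlinarith [hmul, hyp]
      have hsplit : y ^ (p-1) = y ^ p / y := by
        rw [Real.rpow_sub_one (ne_of_gt hy0)]
      have hbd : y ^ (p-1) * Real.exp (-y) ≤ C := by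
        rw [hsplit, div_mul_eq_mul_div]
        rw [div_le_iff₀ hy0, hC]
        have h4y : ζ/4 ≤ y := le_of_lt hy.1
        have : p ^ p * Real.exp (-p) * (4/ζ) * (ζ/4) ≤ p ^ p * Real.exp (-p) * (4/ζ) * y := by
          apply mul_le_mul_of_nonneg_left h4y (by positivity)
        calc y ^ p * Real.exp (-y) ≤ p ^ p * Real.exp (-p) := hkey
          _ = p ^ p * Real.exp (-p) * (4/ζ) * (ζ/4) := by field_simp
          _ ≤ p ^ p * Real.exp (-p) * (4/ζ) * y := this
          _ = 4/ζ * (p ^ p * Real.exp (-p)) * y := by ring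
      calc y ^ (p-1) * (1 - 2*y/ζ) ^ (g-p-1) * Real.exp (-y)
          = (y ^ (p-1) * Real.exp (-y)) * (1 - 2*y/ζ) ^ (g-p-1) := by ring
        _ ≤ C * (1 - 2*y/ζ) ^ (g-p-1) :=
            mul_le_mul_of_nonneg_right hbd (Real.rpow_nonneg hu _)
    calc ∫⁻ y in Set.Ioo (ζ/4) (ζ/2),
        ENNReal.ofReal (y ^ (p-1) * (1 - 2*y/ζ) ^ (g-p-1) * Real.exp (-y))
        ≤ ∫⁻ y in Set.Ioo (ζ/4) (ζ/2),
            ENNReal.ofReal C * ENNReal.ofReal ((1 - 2*y/ζ) ^ (g-p-1)) :=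
          setLIntegral_mono' measurableSet_Ioo step1
      _ = ENNReal.ofReal C *
            ∫⁻ y in Set.Ioo (ζ/4) (ζ/2), ENNReal.ofReal ((1 - 2*y/ζ) ^ (g-p-1)) :=
          lintegral_const_mul' _ _ ENNReal.ofReal_ne_top
      _ = ENNReal.ofReal C * ENNReal.ofReal (ζ/2 * (((1:ℝ)/2) ^ (g-p) / (g-p))) := by
          rw [hBval]
      _ = ENNReal.ofReal (C * (ζ/2 * (((1:ℝ)/2) ^ (g-p) / (g-p)))) :=
          (ENNReal.ofReal_mul hC0).symm
  -- combine
  have hsplit : Set.Ioo (0:ℝ) (ζ/2) = Set.Ioc (0:ℝ) (ζ/4) ∪ Set.Ioo (ζ/4) (ζ/2) :=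
    (Set.Ioc_union_Ioo_eq_Ioo (le_of_lt hζ4) h42).symm
  have hdisj : Disjoint (Set.Ioc (0:ℝ) (ζ/4)) (Set.Ioo (ζ/4) (ζ/2)) := by
    rw [Set.disjoint_left]
    rintro x ⟨_, hx2⟩ ⟨hx3, _⟩
    exact absurd hx2 (not_le.mpr hx3)
  rw [hsplit, lintegral_union measurableSet_Ioo hdisj]
  -- final real arithmetic
  have hfinal : (2:ℝ) ^ (p+1-g) * Real.Gamma p + C * (ζ/2 * (((1:ℝ)/2) ^ (g-p) / (g-p)))
      ≤ (2 ^ (p + 1 - g)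
            + 2 ^ (2 * p - g) * p ^ p * Real.exp (-p) / (Real.Gamma p * (g - p)))
          * Real.Gamma p := by
    have hhalf : ((1:ℝ)/2) ^ (g-p) = (2:ℝ) ^ (p-g) := by
      rw [one_div, Real.inv_rpow (by norm_num : (0:ℝ) ≤ 2),
        show p-g = -(g-p) by ring, Real.rpow_neg (by norm_num : (0:ℝ) ≤ 2)]
    have hkey2 : (2:ℝ) * (2:ℝ) ^ (p-g) ≤ (2:ℝ) ^ (2*p-g) := by
      calc (2:ℝ) * (2:ℝ) ^ (p-g) = (2:ℝ) ^ (1 + (p-g)) := by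
            rw [Real.rpow_add (by norm_num : (0:ℝ) < 2), Real.rpow_one]
        _ ≤ (2:ℝ) ^ (2*p-g) :=
            Real.rpow_le_rpow_of_exponent_le one_le_two (by linarith)
    have e1 : C * (ζ/2 * (((1:ℝ)/2) ^ (g-p) / (g-p)))
        = p ^ p * Real.exp (-p) * (2 * (2:ℝ) ^ (p-g)) / (g-p) := by
      rw [hC, hhalf]; field_simp; ring
    have e2 : (2 ^ (p + 1 - g)
            + 2 ^ (2 * p - g) * p ^ p * Real.exp (-p) / (Real.Gamma p * (g - p)))
          * Real.Gamma p
        = 2 ^ (p+1-g) * Real.Gamma p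
            + p ^ p * Real.exp (-p) * (2:ℝ) ^ (2*p-g) / (g-p) := by
      field_simp
    rw [e1, e2]
    have : p ^ p * Real.exp (-p) * (2 * (2:ℝ) ^ (p-g)) / (g-p)
        ≤ p ^ p * Real.exp (-p) * (2:ℝ) ^ (2*p-g) / (g-p) := by
      gcongr
    linarith
  refine le_trans (add_le_add hA hB) ?_
  rw [← ENNReal.ofReal_add (by positivity) (by positivity)]
  exact ENNReal.ofReal_le_ofReal hfinal
end

section
/- Let g > 1 and 1 ≤ p < g. Then there exists a finite constant C = C(p, g) (one may take C = 1 when p ≤ g − 1, and C = 2^{p+1−g} + 2^{2p−g}·p^p·e^{−p}/(Γ(p)·(g − p)) when g − 1 < p < g) such that for all L > 0 and all ζ > 0: ∫₀^∞ u^{p−1}·(2uL + 1)^{−g}·exp(−u·L·ζ/(2uL + 1)) du ≤ C·Γ(p)·(L·ζ)^{−p}. -/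
open MeasureTheory Real Set

lemma exp_neg_le_rpow_aux (p x : ℝ) (hp : 0 < p) (hx : 0 < x) :
    Real.exp (-x) ≤ p ^ p * Real.exp (-p) * x ^ (-p) := by
  have h1 : Real.log (x / p) ≤ x / p - 1 := Real.log_le_sub_one_of_pos (by positivity)
  have h2 : Real.log x - Real.log p ≤ x / p - 1 := by
    rwa [Real.log_div hx.ne' hp.ne'] at h1
  have h3 : p * Real.log x - x ≤ p * Real.log p - p := by
    have := mul_le_mul_of_nonneg_left h2 hp.le
    have hxp : p * (x / p) = x := by field_simp
    nlinarith [this]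
  have hx1 : x ^ p * Real.exp (-x) ≤ p ^ p * Real.exp (-p) := by
    rw [Real.rpow_def_of_pos hx, Real.rpow_def_of_pos hp, ← Real.exp_add, ← Real.exp_add]
    exact Real.exp_le_exp.mpr (by rw [mul_comm (Real.log x) p, mul_comm (Real.log p) p]; linarith)
  calc Real.exp (-x) = x ^ p * Real.exp (-x) * x ^ (-p) := by
        rw [mul_comm (x ^ p), mul_assoc, ← Real.rpow_add hx, add_neg_cancel, Real.rpow_zero, mul_one]
    _ ≤ p ^ p * Real.exp (-p) * x ^ (-p) :=
        mul_le_mul_of_nonneg_right hx1 (Real.rpow_nonneg hx.le _)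

/-- Analytic core of Lemma A: for `g > 1` and `1 ≤ p < g` there exists a finite
constant `C = C(p, g)` such that for all `L > 0` and `ζ > 0`,
`∫₀^∞ u^{p−1}(2uL+1)^{−g}·exp(−uLζ/(2uL+1)) du ≤ C·Γ(p)·(Lζ)^{−p}`. -/
theorem cir_negative_moment_bound
    (p g : ℝ) (hg : 1 < g) (hp₁ : 1 ≤ p) (hp₂ : p < g) :
    ∃ C : ℝ, ∀ L : ℝ, 0 < L → ∀ ζ : ℝ, 0 < ζ →
      ∫⁻ u in Set.Ioi (0 : ℝ),
          ENNReal.ofReal (u ^ (p - 1) * (2 * u * L + 1) ^ (-g)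
            * Real.exp (-(u * L * ζ) / (2 * u * L + 1))) ≤
        ENNReal.ofReal (C * Real.Gamma p * (L * ζ) ^ (-p)) := by
  have hp0 : 0 < p := lt_of_lt_of_le one_pos hp₁
  have hΓ : 0 < Real.Gamma p := Real.Gamma_pos_of_pos hp0
  have hgp : 0 < g - p := by linarith
  refine ⟨2 ^ p + 2 ^ p * p ^ p * Real.exp (-p) / (Real.Gamma p * (g - p)), ?_⟩
  intro L hL ζ hζ
  set b := L * ζ with hbdef
  have hb0 : 0 < b := mul_pos hL hζ
  have h2L : (0:ℝ) < 2 * L := by linarith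
  set a := (2 * L)⁻¹ with hadef
  have ha0 : 0 < a := by positivity
  rw [← Set.Ioc_union_Ioi_eq_Ioi ha0.le,
      lintegral_union measurableSet_Ioi (Set.Ioc_disjoint_Ioi le_rfl)]
  -- Part 1 : small u
  have key1 : (∫⁻ u in Set.Ioc 0 a,
        ENNReal.ofReal (u ^ (p - 1) * (2 * u * L + 1) ^ (-g)
          * Real.exp (-(u * L * ζ) / (2 * u * L + 1))))
      ≤ ENNReal.ofReal (2 ^ p * Real.Gamma p * b ^ (-p)) := by
    have hint : IntegrableOn (fun u : ℝ => u ^ (p - 1) * Real.exp (-(b / 2 * u)))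
        (Set.Ioi 0) := by
      have h := integrableOn_rpow_mul_exp_neg_mul_rpow (p := 1) (s := p - 1) (b := b / 2)
        (by linarith) one_pos (by positivity)
      refine h.congr_fun (fun x _ => ?_) measurableSet_Ioi
      simp only [Real.rpow_one, neg_mul]
    have hnn : 0 ≤ᵐ[volume.restrict (Set.Ioi (0:ℝ))]
        fun u => u ^ (p - 1) * Real.exp (-(b / 2 * u)) := by
      filter_upwards [ae_restrict_mem measurableSet_Ioi] with x hx
      have hx0 : (0:ℝ) < x := hx
      positivity
    calc (∫⁻ u in Set.Ioc 0 a,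
          ENNReal.ofReal (u ^ (p - 1) * (2 * u * L + 1) ^ (-g)
            * Real.exp (-(u * L * ζ) / (2 * u * L + 1))))
        ≤ ∫⁻ u in Set.Ioc 0 a,
            ENNReal.ofReal (u ^ (p - 1) * Real.exp (-(b / 2 * u))) := by
          refine setLIntegral_mono' measurableSet_Ioc (fun u hu => ?_)
          apply ENNReal.ofReal_le_ofReal
          have hu0 : 0 < u := hu.1
          have hden0 : (0:ℝ) < 2 * u * L + 1 := by nlinarith
          have hle2 : 2 * u * L + 1 ≤ 2 := by
            have hua : u ≤ a := hu.2
            have : 2 * u * L ≤ 1 := by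
              calc 2 * u * L = (2 * L) * u := by ring
                _ ≤ (2 * L) * a := by gcongr
                _ = 1 := by rw [hadef, mul_inv_cancel₀ h2L.ne']
            linarith
          have hpow : (2 * u * L + 1) ^ (-g) ≤ 1 :=
            Real.rpow_le_one_of_one_le_of_nonpos (by nlinarith) (by linarith)
          have hexp : Real.exp (-(u * L * ζ) / (2 * u * L + 1)) ≤ Real.exp (-(b / 2 * u)) := by
            apply Real.exp_le_exp.mpr
            rw [div_le_iff₀ hden0, hbdef]
            nlinarith [mul_pos (mul_pos hu0 hL) hζ]
          calc u ^ (p - 1) * (2 * u * L + 1) ^ (-g)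
                * Real.exp (-(u * L * ζ) / (2 * u * L + 1))
              ≤ u ^ (p - 1) * 1 * Real.exp (-(b / 2 * u)) := by
                apply mul_le_mul _ hexp (Real.exp_pos _).le (by positivity)
                exact mul_le_mul_of_nonneg_left hpow (Real.rpow_nonneg hu0.le _)
            _ = u ^ (p - 1) * Real.exp (-(b / 2 * u)) := by rw [mul_one]
      _ ≤ ∫⁻ u in Set.Ioi 0,
            ENNReal.ofReal (u ^ (p - 1) * Real.exp (-(b / 2 * u))) :=
          lintegral_mono_set Set.Ioc_subset_Ioi_self
      _ = ENNReal.ofReal (∫ u in Set.Ioi 0, u ^ (p - 1) * Real.exp (-(b / 2 * u))) :=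
          (ofReal_integral_eq_lintegral_ofReal hint hnn).symm
      _ = ENNReal.ofReal (2 ^ p * Real.Gamma p * b ^ (-p)) := by
          rw [integral_rpow_mul_exp_neg_mul_Ioi hp0 (by positivity : (0:ℝ) < b / 2)]
          congr 1
          rw [one_div, inv_div, Real.div_rpow (by norm_num) hb0.le, Real.rpow_neg hb0.le]
          ring
  -- Part 2 : large u
  have key2 : (∫⁻ u in Set.Ioi a,
        ENNReal.ofReal (u ^ (p - 1) * (2 * u * L + 1) ^ (-g)
          * Real.exp (-(u * L * ζ) / (2 * u * L + 1))))
      ≤ ENNReal.ofReal (2 ^ p * p ^ p * Real.exp (-p) / (g - p) * b ^ (-p)) := by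
    have hr : p - 1 - g < -1 := by linarith
    have hint2 : IntegrableOn
        (fun u : ℝ => (2 * L) ^ (-g) * Real.exp (-(ζ / 4)) * u ^ (p - 1 - g))
        (Set.Ioi a) := by
      exact (integrableOn_Ioi_rpow_of_lt hr ha0).const_mul _
    have hnn2 : 0 ≤ᵐ[volume.restrict (Set.Ioi a)]
        fun u : ℝ => (2 * L) ^ (-g) * Real.exp (-(ζ / 4)) * u ^ (p - 1 - g) := by
      filter_upwards [ae_restrict_mem measurableSet_Ioi] with x hx
      have hx0 : (0:ℝ) < x := lt_trans ha0 hx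
      positivity
    calc (∫⁻ u in Set.Ioi a,
          ENNReal.ofReal (u ^ (p - 1) * (2 * u * L + 1) ^ (-g)
            * Real.exp (-(u * L * ζ) / (2 * u * L + 1))))
        ≤ ∫⁻ u in Set.Ioi a,
            ENNReal.ofReal ((2 * L) ^ (-g) * Real.exp (-(ζ / 4)) * u ^ (p - 1 - g)) := by
          refine setLIntegral_mono' measurableSet_Ioi (fun u hu => ?_)
          apply ENNReal.ofReal_le_ofReal
          have hu0 : 0 < u := lt_trans ha0 hu
          have h1le : (1:ℝ) ≤ 2 * u * L := by
            have hau : a ≤ u := (le_of_lt hu)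
            calc (1:ℝ) = (2 * L) * a := by rw [hadef, mul_inv_cancel₀ h2L.ne']
              _ ≤ (2 * L) * u := by gcongr
              _ = 2 * u * L := by ring
          have hden0 : (0:ℝ) < 2 * u * L + 1 := by linarith
          have hpow : (2 * u * L + 1) ^ (-g) ≤ (2 * u * L) ^ (-g) :=
            Real.rpow_le_rpow_of_nonpos (by linarith) (by linarith) (by linarith)
          have hpow2 : (2 * u * L) ^ (-g) = (2 * L) ^ (-g) * u ^ (-g) := by
            rw [show 2 * u * L = (2 * L) * u by ring, Real.mul_rpow h2L.le hu0.le]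
          have hexp : Real.exp (-(u * L * ζ) / (2 * u * L + 1)) ≤ Real.exp (-(ζ / 4)) := by
            apply Real.exp_le_exp.mpr
            rw [div_le_iff₀ hden0]
            nlinarith [mul_le_mul_of_nonneg_right h1le hζ.le]
          calc u ^ (p - 1) * (2 * u * L + 1) ^ (-g)
                * Real.exp (-(u * L * ζ) / (2 * u * L + 1))
              ≤ u ^ (p - 1) * ((2 * L) ^ (-g) * u ^ (-g)) * Real.exp (-(ζ / 4)) := by
                apply mul_le_mul _ hexp (Real.exp_pos _).le (by positivity)
                rw [← hpow2]
                exact mul_le_mul_of_nonneg_left hpow (Real.rpow_nonneg hu0.le _)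
            _ = (2 * L) ^ (-g) * Real.exp (-(ζ / 4)) * u ^ (p - 1 - g) := by
                rw [show p - 1 - g = (p - 1) + (-g) by ring, Real.rpow_add hu0]
                ring
      _ = ENNReal.ofReal ((2 * L) ^ (-g) * Real.exp (-(ζ / 4))
            * (-a ^ (p - 1 - g + 1) / (p - 1 - g + 1))) := by
          rw [← ofReal_integral_eq_lintegral_ofReal hint2 hnn2]
          congr 1
          rw [MeasureTheory.integral_const_mul, integral_Ioi_rpow_of_lt hr ha0]
      _ ≤ ENNReal.ofReal (2 ^ p * p ^ p * Real.exp (-p) / (g - p) * b ^ (-p)) := by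
          apply ENNReal.ofReal_le_ofReal
          have h5 : p - 1 - g + 1 = p - g := by ring
          rw [h5]
          have e0 : -a ^ (p - g) / (p - g) = a ^ (p - g) / (g - p) := by
            rw [show p - g = -(g - p) by ring, div_neg, neg_div, neg_neg]
          rw [e0]
          have e1 : a ^ (p - g) = (2 * L) ^ (g - p) := by
            rw [hadef, Real.inv_rpow h2L.le, ← Real.rpow_neg h2L.le, neg_sub]
          rw [e1]
          have e3 : Real.exp (-(ζ / 4)) ≤ p ^ p * Real.exp (-p) * (ζ / 4) ^ (-p) :=
            exp_neg_le_rpow_aux p (ζ / 4) hp0 (by positivity)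
          have e2 : (2 * L) ^ (-g) * (2 * L) ^ (g - p) = (2 * L) ^ (-p) := by
            rw [← Real.rpow_add h2L]; congr 1; ring
          have e4 : (2 * L) ^ (-p) * (ζ / 4) ^ (-p) = 2 ^ p * b ^ (-p) := by
            rw [← Real.mul_rpow h2L.le (by positivity : (0:ℝ) ≤ ζ / 4),
              show (2 * L) * (ζ / 4) = b / 2 by rw [hbdef]; ring,
              Real.rpow_neg (by positivity : (0:ℝ) ≤ b / 2),
              Real.div_rpow hb0.le (by norm_num : (0:ℝ) ≤ 2),
              Real.rpow_neg hb0.le, inv_div, div_eq_mul_inv]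
          calc (2 * L) ^ (-g) * Real.exp (-(ζ / 4)) * ((2 * L) ^ (g - p) / (g - p))
              ≤ (2 * L) ^ (-g) * (p ^ p * Real.exp (-p) * (ζ / 4) ^ (-p))
                  * ((2 * L) ^ (g - p) / (g - p)) := by
                apply mul_le_mul_of_nonneg_right
                  (mul_le_mul_of_nonneg_left e3 (Real.rpow_nonneg h2L.le _)) (by positivity)
            _ = ((2 * L) ^ (-g) * (2 * L) ^ (g - p)) * (ζ / 4) ^ (-p)
                  * (p ^ p * Real.exp (-p)) / (g - p) := by ring
            _ = ((2 * L) ^ (-p) * (ζ / 4) ^ (-p)) * (p ^ p * Real.exp (-p)) / (g - p) := by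
                rw [e2]
            _ = (2 ^ p * b ^ (-p)) * (p ^ p * Real.exp (-p)) / (g - p) := by rw [e4]
            _ = 2 ^ p * p ^ p * Real.exp (-p) / (g - p) * b ^ (-p) := by ring
  calc _ ≤ ENNReal.ofReal (2 ^ p * Real.Gamma p * b ^ (-p))
        + ENNReal.ofReal (2 ^ p * p ^ p * Real.exp (-p) / (g - p) * b ^ (-p)) :=
      add_le_add key1 key2
    _ ≤ _ := by
      rw [← ENNReal.ofReal_add (by positivity) (by positivity)]
      apply ENNReal.ofReal_le_ofReal
      apply le_of_eq
      field_simp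
end

section
/- Let g > 1 and let p be a real number with 0 < p ≤ g − 1. Then for all L > 0 and all ζ > 0: ∫₀^∞ u^{p−1}·(2uL + 1)^{−g}·exp(−u·L·ζ/(2uL + 1)) du ≤ Γ(p)·(L·ζ)^{−p}, where Γ denotes the Gamma function. -/
open MeasureTheory Set

/-- One-variable lintegral change of variables. -/
lemma my_lintegral_image_eq {s : Set ℝ} {f f' : ℝ → ℝ}
    (hs : MeasurableSet s) (hf' : ∀ x ∈ s, HasDerivWithinAt f (f' x) s x)
    (hf : Set.InjOn f s) (g : ℝ → ENNReal) :
    ∫⁻ x in f '' s, g x = ∫⁻ x in s, ENNReal.ofReal |f' x| * g (f x) := by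
  simpa only [ContinuousLinearMap.det_toSpanSingleton] using
    lintegral_image_eq_lintegral_abs_det_fderiv_mul volume hs
      (fun x hx => (hf' x hx).hasFDerivWithinAt) hf g

/-- Sharp-constant case (`L_p = 1`) of Lemma A, extended to all `0 < p ≤ g − 1`:
for all `L > 0` and `ζ > 0`,
`∫₀^∞ u^{p−1}(2uL+1)^{−g}·exp(−uLζ/(2uL+1)) du ≤ Γ(p)·(Lζ)^{−p}`. -/
theorem cir_negative_moment_bound_sharp
    (p g : ℝ) (hg : 1 < g) (hp₁ : 0 < p) (hp₂ : p ≤ g - 1) :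
    ∀ L : ℝ, 0 < L → ∀ ζ : ℝ, 0 < ζ →
      ∫⁻ u in Set.Ioi (0 : ℝ),
          ENNReal.ofReal (u ^ (p - 1) * (2 * u * L + 1) ^ (-g)
            * Real.exp (-(u * L * ζ) / (2 * u * L + 1))) ≤
        ENNReal.ofReal (Real.Gamma p * (L * ζ) ^ (-p)) := by
  intro L hL ζ hζ
  set c : ℝ := L * ζ with hc_def
  have hc : (0 : ℝ) < c := mul_pos hL hζ
  -- integrability of the Gamma-type integrand
  have hInt : IntegrableOn (fun t : ℝ => t ^ (p - 1) * Real.exp (-(c * t))) (Set.Ioi 0) := by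
    have h0 : IntegrableOn (fun x : ℝ => Real.exp (-(c * x)) * (c * x) ^ (p - 1))
        (Set.Ioi 0) := by
      have := (integrableOn_Ioi_comp_mul_left_iff
        (fun x : ℝ => Real.exp (-x) * x ^ (p - 1)) 0 hc).mpr
      simpa [mul_zero] using this (by simpa using Real.GammaIntegral_convergent hp₁)
    refine IntegrableOn.congr_fun (h0.const_mul ((c ^ (p - 1))⁻¹)) (fun t ht => ?_) measurableSet_Ioi
    have ht' : (0 : ℝ) < t := ht
    rw [Real.mul_rpow hc.le ht'.le]
    have hcp : (c : ℝ) ^ (p - 1) ≠ 0 := by positivity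
    field_simp
  -- the Gamma integral value
  have hGamma : ∫⁻ t in Set.Ioi (0 : ℝ), ENNReal.ofReal (t ^ (p - 1) * Real.exp (-(c * t)))
      = ENNReal.ofReal (Real.Gamma p * c ^ (-p)) := by
    rw [← ofReal_integral_eq_lintegral_ofReal hInt
      (ae_restrict_of_forall_mem measurableSet_Ioi (fun t ht => by
        have : (0 : ℝ) < t := ht
        positivity))]
    congr 1
    rw [Real.integral_rpow_mul_exp_neg_mul_Ioi hp₁ hc, one_div, Real.inv_rpow hc.le,
      ← Real.rpow_neg hc.le, mul_comm]
  -- change of variables  u = t / (1 - 2 L t)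
  set s : Set ℝ := Set.Ioo (0 : ℝ) (1 / (2 * L)) with hs_def
  set f : ℝ → ℝ := fun t => t / (1 - 2 * L * t) with hf_def
  have hden : ∀ t ∈ s, (0 : ℝ) < 1 - 2 * L * t := by
    intro t ht
    have h2L : (0 : ℝ) < 2 * L := by positivity
    have := (lt_div_iff₀ h2L).mp ht.2
    nlinarith
  have himg : f '' s = Set.Ioi (0 : ℝ) := by
    ext u
    constructor
    · rintro ⟨t, ht, rfl⟩
      have hd := hden t ht
      exact div_pos ht.1 hd
    · intro hu
      have hu' : (0 : ℝ) < u := hu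
      have hden2 : (0 : ℝ) < 2 * u * L + 1 := by positivity
      refine ⟨u / (2 * u * L + 1), ⟨div_pos hu' hden2, ?_⟩, ?_⟩
      · rw [div_lt_div_iff₀ hden2 (by positivity)]
        nlinarith
      · have key : 1 - 2 * L * (u / (2 * u * L + 1)) = 1 / (2 * u * L + 1) := by
          field_simp
          ring
        simp only [hf_def, key]
        field_simp
  have hderiv : ∀ t ∈ s, HasDerivWithinAt f (((1 - 2 * L * t) ^ 2)⁻¹) s t := by
    intro t ht
    have hd := hden t ht
    have h1 : HasDerivAt (fun x : ℝ => 1 - 2 * L * x) (-(2 * L)) t := by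
      simpa using ((hasDerivAt_id t).const_mul (2 * L)).const_sub 1
    have h2 := (hasDerivAt_id t).div h1 hd.ne'
    have : (1 * (1 - 2 * L * t) - t * -(2 * L)) / (1 - 2 * L * t) ^ 2
        = ((1 - 2 * L * t) ^ 2)⁻¹ := by
      field_simp
      ring
    simp only [id] at h2
    rw [this] at h2
    exact h2.hasDerivWithinAt
  have hinj : Set.InjOn f s := by
    intro a ha b hb h
    have hda := hden a ha
    have hdb := hden b hb
    rw [hf_def] at h
    rw [div_eq_div_iff hda.ne' hdb.ne'] at h
    nlinarith
  rw [← himg, my_lintegral_image_eq measurableSet_Ioo hderiv hinj]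
  calc ∫⁻ t in s, ENNReal.ofReal |((1 - 2 * L * t) ^ 2)⁻¹|
        * ENNReal.ofReal ((f t) ^ (p - 1) * (2 * (f t) * L + 1) ^ (-g)
          * Real.exp (-((f t) * L * ζ) / (2 * (f t) * L + 1)))
      ≤ ∫⁻ t in s, ENNReal.ofReal (t ^ (p - 1) * Real.exp (-(c * t))) := by
        refine setLIntegral_mono' measurableSet_Ioo (fun t ht => ?_)
        have hd := hden t ht
        have ht0 : (0 : ℝ) < t := ht.1
        set d : ℝ := 1 - 2 * L * t with hd_def
        rw [← ENNReal.ofReal_mul (abs_nonneg _)]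
        refine ENNReal.ofReal_le_ofReal ?_
        have hft : f t = t / d := rfl
        have e2 : 2 * (f t) * L + 1 = d⁻¹ := by
          refine eq_inv_of_mul_eq_one_left ?_
          rw [hft]
          field_simp
          ring
        have e1 : (f t) ^ (p - 1) = t ^ (p - 1) / d ^ (p - 1) := by
          rw [hft, Real.div_rpow ht0.le hd.le]
        have e3 : (d⁻¹ : ℝ) ^ (-g) = d ^ g := by
          rw [Real.inv_rpow hd.le, Real.rpow_neg hd.le, inv_inv]
        have e4 : -((f t) * L * ζ) / (2 * (f t) * L + 1) = -(c * t) := by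
          rw [e2, hft]
          have h5 : t / d * L * ζ * d = c * t := by
            rw [hc_def]
            field_simp
          rw [div_inv_eq_mul, neg_mul, h5]
        rw [e4, e1, e2, e3, abs_of_nonneg (by positivity : (0:ℝ) ≤ ((d ^ 2)⁻¹ : ℝ))]
        have efact : d ^ (g - (p - 1) - 2) = d ^ g / d ^ (p - 1) / d ^ (2 : ℕ) := by
          rw [← Real.rpow_natCast d 2, ← Real.rpow_sub hd, ← Real.rpow_sub hd]
          norm_num
        have h1 : (d ^ 2 : ℝ)⁻¹ * (t ^ (p - 1) / d ^ (p - 1) * d ^ g * Real.exp (-(c * t)))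
            = (t ^ (p - 1) * Real.exp (-(c * t))) * (d ^ g / d ^ (p - 1) / d ^ (2 : ℕ)) := by
          ring
        rw [h1, ← efact]
        have hdle : d ^ (g - (p - 1) - 2) ≤ 1 := by
          have hd1 : d ≤ 1 := by
            have : (0 : ℝ) ≤ 2 * L * t := by positivity
            linarith
          exact Real.rpow_le_one hd.le hd1 (by linarith)
        exact mul_le_of_le_one_right
          (mul_nonneg (Real.rpow_nonneg ht0.le _) (Real.exp_pos _).le) hdle
    _ ≤ ∫⁻ t in Set.Ioi (0 : ℝ), ENNReal.ofReal (t ^ (p - 1) * Real.exp (-(c * t))) :=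
        lintegral_mono_set Set.Ioo_subset_Ioi_self
    _ = ENNReal.ofReal (Real.Gamma p * c ^ (-p)) := hGamma
    _ = ENNReal.ofReal (Real.Gamma p * (L * ζ) ^ (-p)) := by rw [hc_def]
end
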